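/- arXiv:2303.15010 — 8 statements merged into one kernel-verified Lean document; each statement's English description precedes it below -/
import Mathlib

section
/- Let p ≥ 5 be a prime and n ≥ 1 an integer. If ν_p(H(n)) ≤ 2, then ν_p(H(pn)) = ν_p(H(n)) − 1, where H(n) = 1 + 1/2 + ⋯ + 1/n is the n-th harmonic number. -/
open Finset

def H (n : ℕ) : ℚ := ∑ i ∈ Finset.range n, (1 : ℚ) / (i + 1)

namespace StmtAux

variable {p : ℕ}

lemma not_dvd_of_lt (hp : p.Prime) {r : ℕ} (h1 : 1 ≤ r) (h2 : r < p) : ¬ p ∣ r :=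
  fun hd => absurd (Nat.le_of_dvd h1 hd) (by omega)

lemma norm_nat_eq_one (hp : p.Prime) {t : ℕ} (ht : ¬ p ∣ t) : padicNorm p (t : ℚ) = 1 := by
  haveI : Fact p.Prime := ⟨hp⟩
  rw [padicNorm.nat_eq_one_iff]; exact ht

lemma norm_one_div_nat (hp : p.Prime) {t : ℕ} (ht : ¬ p ∣ t) :
    padicNorm p (1 / (t : ℚ)) = 1 := by
  haveI : Fact p.Prime := ⟨hp⟩
  rw [padicNorm.div, padicNorm.one, norm_nat_eq_one hp ht, one_div_one]

/-- Key bridge: if the mod-p inverses sum to zero, the rational sum of reciprocals has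
norm at most `p⁻¹`. -/
lemma bridge (hp : p.Prime) {ι : Type*} (s : Finset ι) (b : ι → ℕ)
    (hb : ∀ i ∈ s, ¬ p ∣ b i)
    (h : ∑ i ∈ s, ((b i : ZMod p))⁻¹ = 0) :
    padicNorm p (∑ i ∈ s, (1 : ℚ) / (b i : ℚ)) ≤ (p : ℚ)⁻¹ := by
  haveI : Fact p.Prime := ⟨hp⟩
  classical
  have hbz : ∀ i ∈ s, ((b i : ZMod p)) ≠ 0 := by
    intro i hi h0
    exact hb i hi ((ZMod.natCast_eq_zero_iff _ _).mp h0)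
  have hbne : ∀ i ∈ s, (b i : ℚ) ≠ 0 := by
    intro i hi
    have : b i ≠ 0 := fun h0 => (hb i hi) (h0 ▸ dvd_zero p)
    exact_mod_cast this
  set D : ℕ := ∏ i ∈ s, b i with hD
  set N : ℕ := ∑ i ∈ s, ∏ j ∈ s.erase i, b j with hN
  have hDnd : ¬ p ∣ D := by
    rw [hD, hp.prime.dvd_finset_prod_iff]
    rintro ⟨i, hi, hdvd⟩
    exact hb i hi hdvd
  have key : (∑ i ∈ s, (1 : ℚ) / (b i : ℚ)) = (N : ℚ) / (D : ℚ) := by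
    rw [hN]
    push_cast
    rw [Finset.sum_div]
    refine Finset.sum_congr rfl fun i hi => ?_
    have hsplit : (D : ℚ) = (b i : ℚ) * ∏ j ∈ s.erase i, (b j : ℚ) := by
      rw [hD]; push_cast
      exact (Finset.mul_prod_erase _ _ hi).symm
    have hprod : (∏ j ∈ s.erase i, (b j : ℚ)) ≠ 0 :=
      Finset.prod_ne_zero_iff.mpr fun j hj => hbne j (Finset.mem_of_mem_erase hj)
    rw [hsplit, mul_comm, ← div_div, div_self hprod]
  have hpN : p ∣ N := by
    rw [← ZMod.natCast_eq_zero_iff, hN]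
    push_cast
    have : ∀ i ∈ s, (∏ j ∈ s.erase i, (b j : ZMod p)) = (b i : ZMod p)⁻¹ * (D : ZMod p) := by
      intro i hi
      have hDsplit : (D : ZMod p) = (b i : ZMod p) * ∏ j ∈ s.erase i, (b j : ZMod p) := by
        rw [hD]; push_cast
        exact (Finset.mul_prod_erase _ _ hi).symm
      rw [hDsplit, inv_mul_cancel_left₀ (hbz i hi)]
    rw [Finset.sum_congr rfl this, ← Finset.sum_mul, h, zero_mul]
  have hnormD : padicNorm p (D : ℚ) = 1 := norm_nat_eq_one hp hDnd
  have hnormN : padicNorm p (N : ℚ) ≤ (p : ℚ)⁻¹ := by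
    have : ((p ^ 1 : ℕ) : ℤ) ∣ (N : ℤ) := by
      rw [pow_one]; exact_mod_cast hpN
    have := padicNorm.dvd_iff_norm_le.mp this
    simpa using this
  rw [key, padicNorm.div, hnormD, div_one]
  exact hnormN


lemma sum_sq_univ [NeZero p] (hp : p.Prime) (hp5 : 5 ≤ p) : ∑ x : ZMod p, x ^ 2 = 0 := by
  haveI : Fact p.Prime := ⟨hp⟩
  apply FiniteField.sum_pow_lt_card_sub_one
  rw [ZMod.card]; omega

lemma sum_inv_sq_full (hp : p.Prime) (hp5 : 5 ≤ p) :
    ∑ r ∈ Finset.Ico 1 p, ((r : ZMod p))⁻¹ ^ 2 = 0 := by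
  haveI : Fact p.Prime := ⟨hp⟩
  have h1 : ∑ x : ZMod p, x⁻¹ ^ 2 = 0 := by
    have := Fintype.sum_bijective (fun x : ZMod p => x⁻¹) inv_involutive.bijective
      (fun x => x ^ 2) (fun x => x⁻¹ ^ 2) (fun x => by simp)
    rw [← this]
    exact sum_sq_univ hp hp5
  have hrange : ∑ r ∈ Finset.range p, ((r : ZMod p))⁻¹ ^ 2 = ∑ x : ZMod p, x⁻¹ ^ 2 := by
    apply Finset.sum_nbij' (fun r : ℕ => (r : ZMod p)) (fun x : ZMod p => x.val)
    · intro a _; exact Finset.mem_univ _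
    · intro x _; exact Finset.mem_range.mpr (ZMod.val_lt x)
    · intro a ha; exact ZMod.val_cast_of_lt (Finset.mem_range.mp ha)
    · intro x _; exact ZMod.natCast_rightInverse x
    · intro a _; rfl
  rw [Finset.range_eq_Ico, Finset.sum_eq_sum_Ico_succ_bot hp.pos, h1] at hrange
  simpa using hrange

lemma sum_inv_sq_half (hp : p.Prime) (hp5 : 5 ≤ p) :
    ∑ r ∈ Finset.Ico 1 (p / 2 + 1), ((r : ZMod p))⁻¹ ^ 2 = 0 := by
  haveI : Fact p.Prime := ⟨hp⟩
  have hodd : p % 2 = 1 := Nat.odd_iff.mp (hp.odd_of_ne_two (by omega))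
  set m := p / 2 with hm
  have hpm : p = 2 * m + 1 := by omega
  have hsplit := Finset.sum_Ico_consecutive (fun r : ℕ => ((r : ZMod p))⁻¹ ^ 2)
      (show 1 ≤ m + 1 by omega) (show m + 1 ≤ p by omega)
  have hrefl : ∑ r ∈ Finset.Ico (m+1) p, ((r : ZMod p))⁻¹ ^ 2
      = ∑ r ∈ Finset.Ico 1 (m+1), ((r : ZMod p))⁻¹ ^ 2 := by
    apply Finset.sum_nbij' (fun r => p - r) (fun r => p - r)
    · intro a ha; simp only [Finset.mem_Ico] at *; omega
    · intro a ha; simp only [Finset.mem_Ico] at *; omega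
    · intro a ha; simp only [Finset.mem_Ico] at ha; omega
    · intro a ha; simp only [Finset.mem_Ico] at ha; omega
    · intro a ha
      simp only [Finset.mem_Ico] at ha
      have hcast : ((p - a : ℕ) : ZMod p) = -(a : ZMod p) := by
        have h1 : a ≤ p := by omega
        push_cast [Nat.cast_sub h1]
        simp
      rw [hcast, inv_neg, neg_sq]
  have hfull := sum_inv_sq_full hp hp5
  rw [← hsplit, hrefl] at hfull
  have h2 : (2 : ZMod p) ≠ 0 := by
    intro h0
    have : ((2:ℕ) : ZMod p) = 0 := by exact_mod_cast h0
    have := Nat.le_of_dvd (by norm_num) ((ZMod.natCast_eq_zero_iff 2 p).mp this)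
    omega
  have h2m : (2 : ZMod p) * ∑ r ∈ Finset.Ico 1 (m+1), ((r : ZMod p))⁻¹ ^ 2 = 0 := by
    rw [two_mul]; exact hfull
  exact (mul_eq_zero.mp h2m).resolve_left h2


lemma normQ (hp : p.Prime) (hp5 : 5 ≤ p) :
    padicNorm p (∑ r ∈ Finset.Ico 1 p, (1:ℚ) / ((r^2 : ℕ) : ℚ)) ≤ (p:ℚ)⁻¹ := by
  haveI : Fact p.Prime := ⟨hp⟩
  apply bridge hp _ (fun r => r^2)
  · intro r hr hd
    simp only [Finset.mem_Ico] at hr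
    exact not_dvd_of_lt hp hr.1 hr.2 (hp.dvd_of_dvd_pow hd)
  · refine Eq.trans (Finset.sum_congr rfl fun r _ => ?_) (sum_inv_sq_full hp hp5)
    push_cast
    rw [inv_pow]

lemma normT (hp : p.Prime) (hp5 : 5 ≤ p) :
    padicNorm p (∑ r ∈ Finset.Ico 1 (p / 2 + 1), (1:ℚ) / ((r * (p - r) : ℕ) : ℚ))
      ≤ (p:ℚ)⁻¹ := by
  haveI : Fact p.Prime := ⟨hp⟩
  have hodd : p % 2 = 1 := Nat.odd_iff.mp (hp.odd_of_ne_two (by omega))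
  apply bridge hp _ (fun r => r * (p - r))
  · intro r hr hd
    simp only [Finset.mem_Ico] at hr
    rcases (Nat.Prime.dvd_mul hp).mp hd with h | h
    · exact not_dvd_of_lt hp hr.1 (by omega) h
    · exact not_dvd_of_lt hp (by omega) (by omega) h
  · have hcongr : ∀ r ∈ Finset.Ico 1 (p / 2 + 1),
        (((r * (p - r) : ℕ) : ZMod p))⁻¹ = -(((r : ZMod p))⁻¹ ^ 2) := by
      intro r hr
      simp only [Finset.mem_Ico] at hr
      have h1 : r ≤ p := by omega
      have hcast : ((p - r : ℕ) : ZMod p) = -(r : ZMod p) := by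
        push_cast [Nat.cast_sub h1]; simp
      push_cast [hcast]
      rw [show ((r : ZMod p) * -(r : ZMod p)) = -((r : ZMod p) ^ 2) by ring, inv_neg, inv_pow]
    rw [Finset.sum_congr rfl hcongr, Finset.sum_neg_distrib, sum_inv_sq_half hp hp5, neg_zero]

lemma normW (hp : p.Prime) (hp5 : 5 ≤ p) :
    padicNorm p (∑ r ∈ Finset.Ico 1 p, (1:ℚ) / (r : ℚ)) ≤ (p:ℚ)⁻¹ * (p:ℚ)⁻¹ := by
  haveI : Fact p.Prime := ⟨hp⟩
  have hodd : p % 2 = 1 := Nat.odd_iff.mp (hp.odd_of_ne_two (by omega))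
  set m := p / 2 with hm
  have hpm : p = 2 * m + 1 := by omega
  have hkey : (∑ r ∈ Finset.Ico 1 p, (1:ℚ) / (r : ℚ))
      = (p:ℚ) * ∑ r ∈ Finset.Ico 1 (m + 1), (1:ℚ) / ((r * (p - r) : ℕ) : ℚ) := by
    rw [← Finset.sum_Ico_consecutive (fun r : ℕ => (1:ℚ) / (r : ℚ))
        (show 1 ≤ m + 1 by omega) (show m + 1 ≤ p by omega)]
    have hrefl : ∑ r ∈ Finset.Ico (m+1) p, (1:ℚ) / (r : ℚ)
        = ∑ r ∈ Finset.Ico 1 (m+1), (1:ℚ) / ((p - r : ℕ) : ℚ) := by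
      apply Finset.sum_nbij' (fun r => p - r) (fun r => p - r)
      · intro a ha; simp only [Finset.mem_Ico] at *; omega
      · intro a ha; simp only [Finset.mem_Ico] at *; omega
      · intro a ha; simp only [Finset.mem_Ico] at ha; omega
      · intro a ha; simp only [Finset.mem_Ico] at ha; omega
      · intro a ha
        simp only [Finset.mem_Ico] at ha
        have hpa : p - (p - a) = a := by omega
        rw [hpa]
    rw [hrefl, ← Finset.sum_add_distrib, Finset.mul_sum]
    refine Finset.sum_congr rfl fun r hr => ?_
    simp only [Finset.mem_Ico] at hr
    have h1 : (0:ℚ) < (r:ℚ) := by exact_mod_cast hr.1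
    have h2 : (0:ℚ) < ((p - r : ℕ) : ℚ) := by
      have : 1 ≤ p - r := by omega
      exact_mod_cast this
    have h3 : ((r * (p - r) : ℕ) : ℚ) = (r:ℚ) * ((p - r : ℕ) : ℚ) := by push_cast; ring
    rw [h3]
    field_simp
    rw [show ((p - r : ℕ) : ℚ) = (p:ℚ) - (r:ℚ) by
      push_cast [Nat.cast_sub (show r ≤ p by omega)]; ring]
    ring
  rw [hkey, padicNorm.mul, padicNorm.padicNorm_p hp.one_lt]
  exact mul_le_mul_of_nonneg_left (normT hp hp5) (by positivity)

lemma normR (hp : p.Prime) (j : ℕ) :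
    padicNorm p (∑ r ∈ Finset.Ico 1 p,
      (1:ℚ) / (((r^2 : ℕ) : ℚ) * ((j * p + r : ℕ) : ℚ))) ≤ 1 := by
  haveI : Fact p.Prime := ⟨hp⟩
  refine padicNorm.sum_le' (fun r hr => ?_) zero_le_one
  simp only [Finset.mem_Ico] at hr
  have hnd1 : ¬ p ∣ r ^ 2 := fun hd => not_dvd_of_lt hp hr.1 hr.2 (hp.dvd_of_dvd_pow hd)
  have hnd2 : ¬ p ∣ j * p + r := by
    intro hd
    exact not_dvd_of_lt hp hr.1 hr.2 ((Nat.dvd_add_right (dvd_mul_left p j)).mp hd)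
  rw [← one_div_mul_one_div, padicNorm.mul, norm_one_div_nat hp hnd1,
    norm_one_div_nat hp hnd2, one_mul]

lemma normBlock (hp : p.Prime) (hp5 : 5 ≤ p) (j : ℕ) :
    padicNorm p (∑ r ∈ Finset.Ico 1 p, (1:ℚ) / ((j * p + r : ℕ) : ℚ))
      ≤ (p:ℚ)⁻¹ * (p:ℚ)⁻¹ := by
  haveI : Fact p.Prime := ⟨hp⟩
  have hdec : (∑ r ∈ Finset.Ico 1 p, (1:ℚ) / ((j * p + r : ℕ) : ℚ))
      = (∑ r ∈ Finset.Ico 1 p, (1:ℚ) / (r : ℚ))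
        + (-((j:ℚ) * (p:ℚ)) * ∑ r ∈ Finset.Ico 1 p, (1:ℚ) / ((r^2 : ℕ) : ℚ))
        + ((j:ℚ) * (p:ℚ))^2 * ∑ r ∈ Finset.Ico 1 p,
            (1:ℚ) / (((r^2 : ℕ) : ℚ) * ((j * p + r : ℕ) : ℚ)) := by
    rw [Finset.mul_sum, Finset.mul_sum, ← Finset.sum_add_distrib, ← Finset.sum_add_distrib]
    refine Finset.sum_congr rfl fun r hr => ?_
    simp only [Finset.mem_Ico] at hr
    have h1 : (0:ℚ) < (r:ℚ) := by exact_mod_cast hr.1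
    have h2 : (0:ℚ) < (j:ℚ) * (p:ℚ) + (r:ℚ) := by
      have : (0:ℚ) ≤ (j:ℚ) * (p:ℚ) := by positivity
      linarith
    push_cast
    field_simp
    ring
  rw [hdec]
  refine le_trans padicNorm.nonarchimedean (max_le (le_trans padicNorm.nonarchimedean
    (max_le (normW hp hp5) ?_)) ?_)
  · rw [padicNorm.mul, padicNorm.neg, padicNorm.mul, padicNorm.padicNorm_p hp.one_lt]
    have hj : padicNorm p (j:ℚ) ≤ 1 := by
      have := padicNorm.of_int (p := p) (j : ℤ)
      simpa using this
    have hQ := normQ hp hp5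
    have h0 : (0:ℚ) ≤ padicNorm p (∑ r ∈ Finset.Ico 1 p, (1:ℚ) / ((r^2 : ℕ) : ℚ)) :=
      padicNorm.nonneg _
    have hpinv : (0:ℚ) ≤ (p:ℚ)⁻¹ := by positivity
    calc padicNorm p (j:ℚ) * (p:ℚ)⁻¹ * padicNorm p _
        ≤ 1 * (p:ℚ)⁻¹ * (p:ℚ)⁻¹ := by
          apply mul_le_mul (mul_le_mul_of_nonneg_right hj hpinv) hQ h0
          positivity
      _ = (p:ℚ)⁻¹ * (p:ℚ)⁻¹ := by ring
  · rw [padicNorm.mul]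
    have hsq : padicNorm p (((j:ℚ) * (p:ℚ))^2) = (padicNorm p ((j:ℚ) * (p:ℚ)))^2 := by
      rw [sq, padicNorm.mul, sq]
    rw [hsq, padicNorm.mul, padicNorm.padicNorm_p hp.one_lt]
    have hj : padicNorm p (j:ℚ) ≤ 1 := by
      have := padicNorm.of_int (p := p) (j : ℤ)
      simpa using this
    have hR := normR hp j
    have hj0 : (0:ℚ) ≤ padicNorm p (j:ℚ) := padicNorm.nonneg _
    have hR0 : (0:ℚ) ≤ padicNorm p (∑ r ∈ Finset.Ico 1 p,
        (1:ℚ) / (((r^2 : ℕ) : ℚ) * ((j * p + r : ℕ) : ℚ))) := padicNorm.nonneg _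
    have hpinv : (0:ℚ) ≤ (p:ℚ)⁻¹ := by positivity
    calc (padicNorm p (j:ℚ) * (p:ℚ)⁻¹)^2 * padicNorm p _
        ≤ (1 * (p:ℚ)⁻¹)^2 * 1 := by
          apply mul_le_mul _ hR hR0 (by positivity)
          apply pow_le_pow_left₀ (by positivity)
          exact mul_le_mul_of_nonneg_right hj hpinv
      _ = (p:ℚ)⁻¹ * (p:ℚ)⁻¹ := by ring

lemma Hdec (hp : p.Prime) (n : ℕ) :
    H (p * n) = (p:ℚ)⁻¹ * H n
      + ∑ j ∈ Finset.range n, ∑ r ∈ Finset.Ico 1 p, (1:ℚ) / ((j * p + r : ℕ) : ℚ) := by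
  induction n with
  | zero => simp [H]
  | succ n ih =>
    have hpq : (p:ℚ) ≠ 0 := by
      exact_mod_cast hp.pos.ne'
    have h1 : p * (n + 1) = p * n + p := by ring
    rw [h1]
    show (∑ i ∈ Finset.range (p * n + p), (1:ℚ) / ((i : ℚ) + 1)) = _
    rw [Finset.sum_range_add]
    have htail : (∑ i ∈ Finset.range p, (1:ℚ) / (((p * n + i : ℕ) : ℚ) + 1))
        = ∑ r ∈ Finset.Ico 1 (p + 1), (1:ℚ) / ((n * p + r : ℕ) : ℚ) := by
      rw [Finset.sum_Ico_eq_sum_range]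
      simp only [Nat.add_sub_cancel]
      refine Finset.sum_congr rfl fun i _ => ?_
      push_cast
      ring_nf
    have hsplit2 : (∑ r ∈ Finset.Ico 1 (p + 1), (1:ℚ) / ((n * p + r : ℕ) : ℚ))
        = (∑ r ∈ Finset.Ico 1 p, (1:ℚ) / ((n * p + r : ℕ) : ℚ))
          + (1:ℚ) / ((n * p + p : ℕ) : ℚ) :=
      Finset.sum_Ico_succ_top hp.one_lt.le _
    have hlast : (1:ℚ) / ((n * p + p : ℕ) : ℚ) = (p:ℚ)⁻¹ * ((1:ℚ) / ((n:ℚ) + 1)) := by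
      have hc : ((n * p + p : ℕ) : ℚ) = (p:ℚ) * ((n:ℚ) + 1) := by push_cast; ring
      rw [hc, one_div, mul_inv, one_div]
    have hHn1 : H (n + 1) = H n + (1:ℚ) / ((n:ℚ) + 1) := by
      show (∑ i ∈ Finset.range (n + 1), (1:ℚ) / ((i : ℚ) + 1)) = _
      rw [Finset.sum_range_succ]
      rfl
    rw [htail, hsplit2, hlast, hHn1, Finset.sum_range_succ]
    have hHpn : (∑ i ∈ Finset.range (p * n), (1:ℚ) / ((i : ℚ) + 1)) = H (p * n) := rfl
    rw [hHpn, ih]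
    ring_nf
    rw [show (∑ x ∈ Finset.range n, ∑ r ∈ Finset.Ico 1 p, ((x * p + r : ℕ) : ℚ)⁻¹)
      = (∑ x ∈ Finset.range n, ∑ r ∈ Finset.Ico 1 p, ((p * x + r : ℕ) : ℚ)⁻¹) from by
        refine Finset.sum_congr rfl fun x _ => Finset.sum_congr rfl fun r _ => by rw [Nat.mul_comm]]
    ring

end StmtAux

theorem stmt_2' (p : ℕ) (hp : p.Prime) (hp5 : 5 ≤ p) (n : ℕ) (hn : 1 ≤ n)
    (hval : padicValRat p (H n) ≤ 2) :
    padicValRat p (H (p * n)) = padicValRat p (H n) - 1 := by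
  haveI : Fact p.Prime := ⟨hp⟩
  have hp1 : (1:ℚ) < (p:ℚ) := by exact_mod_cast hp.one_lt
  have hp0 : (0:ℚ) < (p:ℚ) := by linarith
  have Hpos : ∀ m : ℕ, 1 ≤ m → 0 < H m := by
    intro m hm
    apply Finset.sum_pos
    · intro i _
      positivity
    · exact Finset.nonempty_range_iff.mpr (by omega)
  have hHn : H n ≠ 0 := (Hpos n hn).ne'
  have hHpn : H (p * n) ≠ 0 := (Hpos _ (by
    have := hp.pos
    exact Nat.one_le_iff_ne_zero.mpr (Nat.mul_ne_zero (by omega) (by omega)))).ne'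
  set v := padicValRat p (H n) with hv
  have hnormHn : padicNorm p (H n) = (p:ℚ) ^ (-v) := padicNorm.eq_zpow_of_nonzero hHn
  have hS : padicNorm p (∑ j ∈ Finset.range n, ∑ r ∈ Finset.Ico 1 p,
      (1:ℚ) / ((j * p + r : ℕ) : ℚ)) ≤ (p:ℚ)⁻¹ * (p:ℚ)⁻¹ :=
    padicNorm.sum_le' (fun j _ => StmtAux.normBlock hp hp5 j) (by positivity)
  have hA : padicNorm p ((p:ℚ)⁻¹ * H n) = (p:ℚ) ^ (-(v - 1)) := by
    rw [padicNorm.mul, hnormHn]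
    have hpi : padicNorm p (p:ℚ)⁻¹ = (p:ℚ) := by
      rw [← one_div, padicNorm.div, padicNorm.one, padicNorm.padicNorm_p hp.one_lt,
        one_div, inv_inv]
    rw [hpi, show -(v - 1) = 1 + -v by ring, zpow_add₀ (ne_of_gt hp0), zpow_one]
  have h2 : (p:ℚ)⁻¹ * (p:ℚ)⁻¹ = (p:ℚ) ^ (-2:ℤ) := by
    rw [show (-2:ℤ) = -1 + -1 by ring, zpow_add₀ (ne_of_gt hp0), zpow_neg_one]
  have hlt : padicNorm p (∑ j ∈ Finset.range n, ∑ r ∈ Finset.Ico 1 p,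
      (1:ℚ) / ((j * p + r : ℕ) : ℚ)) < padicNorm p ((p:ℚ)⁻¹ * H n) := by
    rw [hA]
    refine lt_of_le_of_lt (hS.trans_eq h2) ?_
    exact zpow_right_strictMono₀ hp1 (by omega)
  have hfinal : padicNorm p (H (p * n)) = (p:ℚ) ^ (-(v - 1)) := by
    rw [StmtAux.Hdec hp n, padicNorm.add_eq_max_of_ne (ne_of_gt hlt),
      max_eq_left (le_of_lt hlt), hA]
  rw [padicNorm.eq_zpow_of_nonzero hHpn] at hfinal
  have hinj := zpow_right_injective₀ hp0 (ne_of_gt hp1) hfinal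
  omega

theorem stmt_2 (p : ℕ) (hp : p.Prime) (hp5 : 5 ≤ p) (n : ℕ) (hn : 1 ≤ n)
    (hval : padicValRat p (H n) ≤ 2) :
    padicValRat p (H (p * n)) = padicValRat p (H n) - 1 := by
  exact stmt_2' p hp hp5 n hn hval
end

section
/- For any prime p ≥ 5 and any integer n ≥ 1, ν_p(H(pn) − H(n)/p) ≥ 2, where H denotes the harmonic number. -/
lemma H_split (p : ℕ) (hp : 0 < p) (n : ℕ) :
    H (p * n) - H n / p
      = ∑ j ∈ Finset.range n, ∑ i ∈ Finset.range (p-1),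
          (1:ℚ)/((j:ℚ)*p+i+1) := by
  obtain ⟨q, rfl⟩ : ∃ q, p = q + 1 := ⟨p - 1, by omega⟩
  induction n with
  | zero => simp [H]
  | succ n ih =>
    have hpn : (q+1) * (n+1) = (q+1) * n + (q+1) := by ring
    have e1 : H ((q+1) * n + (q+1))
        = H ((q+1)*n) + ∑ x ∈ Finset.range (q+1), (1:ℚ)/((((q+1)*n+x : ℕ) : ℚ)+1) := by
      unfold H; rw [Finset.sum_range_add]
    have e2 : H (n+1) = H n + 1/((n:ℚ)+1) := by
      unfold H; rw [Finset.sum_range_succ]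
    have hq1 : (((q:ℕ)+1 : ℕ):ℚ) ≠ 0 := by positivity
    have hn1 : ((n:ℚ)+1) ≠ 0 := by positivity
    have key : ∑ x ∈ Finset.range (q+1), (1:ℚ)/((((q+1)*n+x : ℕ) : ℚ)+1)
        = (1/((n:ℚ)+1))/(((q+1 : ℕ):ℚ))
          + ∑ i ∈ Finset.range ((q+1)-1), (1:ℚ)/((n:ℚ)*((q+1:ℕ):ℚ)+(i:ℚ)+1) := by
      rw [Finset.sum_range_succ]
      have e3 : (((q+1)*n+q : ℕ) : ℚ) + 1 = (((q+1:ℕ):ℚ)) * ((n:ℚ)+1) := by push_cast; ring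
      rw [e3]
      simp only [Nat.add_sub_cancel]
      have e5 : ∑ x ∈ Finset.range q, (1:ℚ)/((((q+1)*n+x : ℕ):ℚ)+1)
          = ∑ i ∈ Finset.range q, (1:ℚ)/((n:ℚ)*((q+1:ℕ):ℚ)+(i:ℚ)+1) :=
        Finset.sum_congr rfl fun i _ => by push_cast; ring_nf
      rw [e5, div_div]
      ring
    rw [hpn, e1, e2, key, Finset.sum_range_succ, ← ih]
    ring


def cden (m : ℕ) (x : ℕ × ℕ) : ℕ :=
  (x.1*(2*m+1) + x.2 + 1) * (x.1*(2*m+1) + (2*m - x.2))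

lemma pair_sum (p m : ℕ) (hp : p = 2*m+1) (j : ℕ) :
    ∑ i ∈ Finset.range (p-1), (1:ℚ)/((j:ℚ)*p+i+1)
      = (p:ℚ) * ∑ i ∈ Finset.range m, (2*(j:ℚ)+1)/((cden m (j,i)) : ℚ) := by
  subst hp
  have h1 : 2*m+1-1 = m+m := by omega
  rw [h1, Finset.sum_range_add,
    ← Finset.sum_range_reflect (fun x => (1:ℚ)/((j:ℚ)*((2*m+1 : ℕ):ℚ)+((m+x : ℕ):ℚ)+1)) m,
    Finset.mul_sum, ← Finset.sum_add_distrib]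
  refine Finset.sum_congr rfl fun i hi => ?_
  have him : i < m := Finset.mem_range.mp hi
  have hB : ((m-1-i : ℕ) : ℚ) = (m:ℚ)-1-(i:ℚ) := by
    have h : (m-1-i) + (i + 1) = m := by omega
    have h2 := congrArg (Nat.cast : ℕ → ℚ) h
    push_cast at h2; linarith
  have hcden : ((cden m (j,i) : ℕ) : ℚ)
      = ((j:ℚ)*(2*(m:ℚ)+1)+(i:ℚ)+1) * ((j:ℚ)*(2*(m:ℚ)+1) + (2*(m:ℚ) - (i:ℚ))) := by
    unfold cden
    have hle : i ≤ 2*m := by omega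
    push_cast [Nat.cast_sub hle]
    ring
  have hA : ((j:ℚ)*((2*m+1 : ℕ):ℚ)+(i:ℚ)+1) ≠ 0 := by positivity
  have hBne : ((j:ℚ)*((2*m+1 : ℕ):ℚ)+((m+(m-1-i) : ℕ):ℚ)+1) ≠ 0 := by positivity
  rw [hcden]
  push_cast at hA hBne ⊢
  have hicast : (i:ℚ) < (m:ℚ) := by exact_mod_cast him
  have h0j : (0:ℚ) ≤ (j:ℚ) := Nat.cast_nonneg j
  have h0m : (0:ℚ) ≤ (m:ℚ) := Nat.cast_nonneg m
  have hC : ((j:ℚ) * (2*(m:ℚ)+1) + (2*(m:ℚ) - (i:ℚ))) ≠ 0 := by nlinarith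
  rw [div_add_div _ _ hA hBne, ← mul_div_assoc,
    div_eq_div_iff (mul_ne_zero hA hBne) (mul_ne_zero hA hC), hB]
  ring



lemma cden_pos (m : ℕ) (hm : 1 ≤ m) (x : ℕ × ℕ) (hx : x.2 < m) : 0 < cden m x := by
  unfold cden
  have h1 : 0 < x.1*(2*m+1) + x.2 + 1 := by omega
  have h2 : 0 < x.1*(2*m+1) + (2*m - x.2) := by omega
  positivity

lemma cden_cast (p : ℕ) [Fact p.Prime] (m : ℕ) (hpm : p = 2*m+1) (x : ℕ × ℕ)
    (hx : x.2 < m) :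
    ((cden m x : ℕ) : ZMod p) = -(((x.2+1 : ℕ)) : ZMod p)^2 := by
  unfold cden
  have hp0 : ((p : ℕ) : ZMod p) = 0 := ZMod.natCast_self p
  have h2m : (((2*m : ℕ)) : ZMod p) = -1 := by
    have h := congrArg (Nat.cast : ℕ → ZMod p) hpm
    rw [hp0] at h
    push_cast at h ⊢
    linear_combination -h
  have hsub : (((2*m - x.2 : ℕ)) : ZMod p) = -1 - (x.2 : ZMod p) := by
    rw [Nat.cast_sub (by omega : x.2 ≤ 2*m)]
    push_cast at h2m ⊢
    rw [h2m]
  have hpm' : (((2*m+1 : ℕ)) : ZMod p) = 0 := by rw [← hpm]; exact hp0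
  push_cast at hpm' hsub ⊢
  rw [hsub]
  linear_combination ((x.1:ZMod p)^2 * (2*(m:ZMod p)+1)) * hpm'

lemma cden_cast_ne (p : ℕ) [hfact : Fact p.Prime] (m : ℕ) (hpm : p = 2*m+1) (x : ℕ × ℕ)
    (hx : x.2 < m) : ((cden m x : ℕ) : ZMod p) ≠ 0 := by
  rw [cden_cast p m hpm x hx]
  have h1 : (((x.2+1 : ℕ)) : ZMod p) ≠ 0 := by
    rw [Ne, ZMod.natCast_eq_zero_iff]
    intro h
    have := Nat.le_of_dvd (by omega) h
    omega
  simpa using pow_ne_zero 2 h1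

lemma sum_div_eq {α : Type*} [DecidableEq α] (A : Finset α) (f g : α → ℕ)
    (hf : ∀ x ∈ A, 0 < f x) :
    ∑ x ∈ A, ((g x : ℚ))/((f x : ℕ):ℚ)
      = ((∑ x ∈ A, g x * ∏ y ∈ A.erase x, f y : ℕ) : ℚ) / ((∏ x ∈ A, f x : ℕ):ℚ) := by
  have hprod : ((∏ x ∈ A, f x : ℕ):ℚ) ≠ 0 := by
    push_cast
    exact Finset.prod_ne_zero_iff.mpr fun x hx => by exact_mod_cast (hf x hx).ne'
  rw [eq_div_iff hprod]
  push_cast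
  rw [Finset.sum_mul]
  refine Finset.sum_congr rfl fun x hx => ?_
  have hfx : ((f x : ℕ):ℚ) ≠ 0 := by exact_mod_cast (hf x hx).ne'
  have e := Finset.mul_prod_erase A (fun y => ((f y : ℕ) : ℚ)) hx
  field_simp
  rw [← e]
  ring
lemma W_zero (p : ℕ) [hfact : Fact p.Prime] (hp5 : 5 ≤ p) (m : ℕ) (hpm : p = 2*m+1) :
    ∑ i ∈ Finset.range m, ((((i+1 : ℕ)) : ZMod p)^2)⁻¹ = 0 := by
  have hV : ∑ r ∈ Finset.range p, (((r : ℕ) : ZMod p)⁻¹)^2 = 0 := by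
    have h1 : ∑ r ∈ Finset.range p, (((r : ℕ) : ZMod p)⁻¹)^2
        = ∑ x : ZMod p, (x⁻¹)^2 := by
      refine Finset.sum_nbij' (fun r => ((r : ℕ) : ZMod p)) (fun x => x.val)
        ?_ ?_ ?_ ?_ ?_
      · intro a _; exact Finset.mem_univ _
      · intro b _; exact Finset.mem_range.mpr (ZMod.val_lt b)
      · intro a ha; exact ZMod.val_cast_of_lt (Finset.mem_range.mp ha)
      · intro b _; exact ZMod.natCast_zmod_val b
      · intro a _; rfl
    have h2 : ∑ x : ZMod p, (x⁻¹ : ZMod p)^2 = ∑ x : ZMod p, x^2 := by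
      refine Finset.sum_nbij' (fun x => x⁻¹) (fun x => x⁻¹) ?_ ?_ ?_ ?_ ?_
      · intro a _; exact Finset.mem_univ _
      · intro a _; exact Finset.mem_univ _
      · intro a _; exact inv_inv a
      · intro a _; exact inv_inv a
      · intro a _; rfl
    have h3 : ∑ x : ZMod p, (x : ZMod p)^2 = 0 := by
      have hcard : (2 : ℕ) < Fintype.card (ZMod p) - 1 := by
        rw [ZMod.card]; omega
      exact FiniteField.sum_pow_lt_card_sub_one (ZMod p) 2 hcard
    rw [h1, h2, h3]
  have hm : 1 ≤ m := by omega
  -- split V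
  have hsplit : ∑ r ∈ Finset.range p, (((r : ℕ) : ZMod p)⁻¹)^2
      = 2 * ∑ i ∈ Finset.range m, ((((i+1:ℕ)) : ZMod p)⁻¹)^2 := by
    have e0 : ∑ r ∈ Finset.range p, (((r : ℕ) : ZMod p)⁻¹)^2
        = ∑ r ∈ Finset.range (2*m), ((((r+1:ℕ)) : ZMod p)⁻¹)^2 + (((0:ℕ) : ZMod p)⁻¹)^2 := by
      rw [show Finset.range p = Finset.range (2*m+1) from by rw [hpm]]
      exact Finset.sum_range_succ' _ (2*m)
    rw [e0]
    simp only [Nat.cast_zero, inv_zero, ne_eq, OfNat.ofNat_ne_zero,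
      not_false_eq_true, zero_pow, add_zero]
    rw [two_mul m, Finset.sum_range_add]
    have e1 : ∑ i ∈ Finset.range m, ((((m+i+1:ℕ)) : ZMod p)⁻¹)^2
        = ∑ i ∈ Finset.range m, ((((i+1:ℕ)) : ZMod p)⁻¹)^2 := by
      rw [← Finset.sum_range_reflect (fun i => ((((m+i+1:ℕ)) : ZMod p)⁻¹)^2) m]
      refine Finset.sum_congr rfl fun i hi => ?_
      have him : i < m := Finset.mem_range.mp hi
      have key : (((m+(m-1-i)+1 : ℕ)) : ZMod p) = -(((i+1 : ℕ)) : ZMod p) := by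
        have h4 : (m+(m-1-i)+1) + (i+1) = p := by omega
        have h5 := congrArg (Nat.cast : ℕ → ZMod p) h4
        push_cast at h5
        rw [ZMod.natCast_self] at h5
        push_cast
        linear_combination h5
      push_cast at key ⊢
      simp [key, inv_neg, neg_sq]
      ring
    rw [e1]
    ring
  have h2ne : (2 : ZMod p) ≠ 0 := by
    have : ((2:ℕ) : ZMod p) ≠ 0 := by
      rw [Ne, ZMod.natCast_eq_zero_iff]
      intro h
      have := Nat.le_of_dvd (by norm_num) h
      omega
    simpa using this
  have : (2 : ZMod p) * ∑ i ∈ Finset.range m, ((((i+1:ℕ)) : ZMod p)⁻¹)^2 = 0 := by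
    rw [← hsplit, hV]
  have hW := (mul_eq_zero.mp this).resolve_left h2ne
  calc ∑ i ∈ Finset.range m, ((((i+1 : ℕ)) : ZMod p)^2)⁻¹
      = ∑ i ∈ Finset.range m, ((((i+1:ℕ)) : ZMod p)⁻¹)^2 := by
        refine Finset.sum_congr rfl fun i _ => ?_
        rw [inv_pow]
    _ = 0 := hW

lemma T_val (p : ℕ) [hfact : Fact p.Prime] (hp5 : 5 ≤ p) (m : ℕ) (hpm : p = 2*m+1) (n : ℕ) :
    (∑ x ∈ Finset.range n ×ˢ Finset.range m, (2*(x.1:ℚ)+1)/((cden m x : ℕ):ℚ)) = 0 ∨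
    1 ≤ padicValRat p
      (∑ x ∈ Finset.range n ×ˢ Finset.range m, (2*(x.1:ℚ)+1)/((cden m x : ℕ):ℚ)) := by
  have hm : 1 ≤ m := by omega
  have hmemx : ∀ x ∈ Finset.range n ×ˢ Finset.range m, x.2 < m := fun x hx =>
    Finset.mem_range.mp (Finset.mem_product.mp hx).2
  have hpos : ∀ x ∈ Finset.range n ×ˢ Finset.range m, 0 < cden m x := fun x hx =>
    cden_pos m hm x (hmemx x hx)
  have hnum : ∀ x : ℕ × ℕ, (2*(x.1:ℚ)+1) = (((2*x.1+1 : ℕ)):ℚ) := fun x => by push_cast; ring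
  have hTeq : (∑ x ∈ Finset.range n ×ˢ Finset.range m, (2*(x.1:ℚ)+1)/((cden m x : ℕ):ℚ))
      = ((∑ x ∈ Finset.range n ×ˢ Finset.range m,
            (2*x.1+1) * ∏ y ∈ (Finset.range n ×ˢ Finset.range m).erase x, cden m y : ℕ) : ℚ)
        / ((∏ x ∈ Finset.range n ×ˢ Finset.range m, cden m x : ℕ):ℚ) := by
    rw [← sum_div_eq _ _ _ hpos]
    exact Finset.sum_congr rfl fun x _ => by rw [hnum x]
  set N : ℕ := ∑ x ∈ Finset.range n ×ˢ Finset.range m,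
      (2*x.1+1) * ∏ y ∈ (Finset.range n ×ˢ Finset.range m).erase x, cden m y with hN
  set D : ℕ := ∏ x ∈ Finset.range n ×ˢ Finset.range m, cden m x with hD
  -- D not divisible by p
  have hDcast : ((D : ℕ) : ZMod p) ≠ 0 := by
    rw [hD]
    push_cast
    exact Finset.prod_ne_zero_iff.mpr fun x hx => cden_cast_ne p m hpm x (hmemx x hx)
  have hDnd : ¬ p ∣ D := fun h => hDcast ((ZMod.natCast_eq_zero_iff D p).mpr h)
  have hDpos : 0 < D := Finset.prod_pos hpos
  -- N divisible by p
  have hZ : ∑ x ∈ Finset.range n ×ˢ Finset.range m,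
      (((2*x.1+1 : ℕ)) : ZMod p) * (((cden m x : ℕ)) : ZMod p)⁻¹ = 0 := by
    rw [Finset.sum_product]
    have hinner : ∀ j ∈ Finset.range n,
        ∑ i ∈ Finset.range m, (((2*j+1 : ℕ)) : ZMod p) * (((cden m (j,i) : ℕ)) : ZMod p)⁻¹
          = 0 := by
      intro j _
      have : ∀ i ∈ Finset.range m,
          (((2*j+1 : ℕ)) : ZMod p) * (((cden m (j,i) : ℕ)) : ZMod p)⁻¹
            = (((2*j+1 : ℕ)) : ZMod p) * -(((((i+1 : ℕ)) : ZMod p))^2)⁻¹ := by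
        intro i hi
        rw [cden_cast p m hpm (j,i) (Finset.mem_range.mp hi), inv_neg]
      rw [Finset.sum_congr rfl this, ← Finset.mul_sum]
      have : ∑ i ∈ Finset.range m, -(((((i+1 : ℕ)) : ZMod p))^2)⁻¹
          = -(∑ i ∈ Finset.range m, ((((i+1 : ℕ)) : ZMod p)^2)⁻¹) := by
        rw [← Finset.sum_neg_distrib]
      rw [this, W_zero p hp5 m hpm]
      simp
    rw [Finset.sum_congr rfl hinner]
    simp
  have hNcast : ((N : ℕ) : ZMod p) = 0 := by
    rw [hN]
    push_cast
    have herase : ∀ x ∈ Finset.range n ×ˢ Finset.range m,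
        ∏ y ∈ (Finset.range n ×ˢ Finset.range m).erase x, ((cden m y : ℕ) : ZMod p)
          = (((cden m x : ℕ)) : ZMod p)⁻¹
            * ∏ y ∈ Finset.range n ×ˢ Finset.range m, ((cden m y : ℕ) : ZMod p) := by
      intro x hx
      have e := Finset.mul_prod_erase (Finset.range n ×ˢ Finset.range m)
        (fun y => ((cden m y : ℕ) : ZMod p)) hx
      rw [← e, inv_mul_cancel_left₀ (cden_cast_ne p m hpm x (hmemx x hx))]
    calc ∑ x ∈ Finset.range n ×ˢ Finset.range m,
          (2*(x.1 : ZMod p)+1) * ∏ y ∈ (Finset.range n ×ˢ Finset.range m).erase x,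
            ((cden m y : ℕ) : ZMod p)
        = (∑ x ∈ Finset.range n ×ˢ Finset.range m,
            (((2*x.1+1 : ℕ)) : ZMod p) * (((cden m x : ℕ)) : ZMod p)⁻¹)
            * ∏ y ∈ Finset.range n ×ˢ Finset.range m, ((cden m y : ℕ) : ZMod p) := by
          rw [Finset.sum_mul]
          refine Finset.sum_congr rfl fun x hx => ?_
          rw [herase x hx]
          push_cast
          ring
      _ = 0 := by rw [hZ, zero_mul]
  have hNdvd : p ∣ N := (ZMod.natCast_eq_zero_iff N p).mp hNcast
  -- conclude
  by_cases hT0 : ((N : ℕ) : ℚ) = 0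
  · left
    rw [hTeq, hT0, zero_div]
  · right
    have hNpos : 0 < N := Nat.pos_of_ne_zero (by exact_mod_cast hT0)
    have hDneQ : ((D:ℕ):ℚ) ≠ 0 := by exact_mod_cast hDpos.ne'
    rw [hTeq, padicValRat.div hT0 hDneQ, padicValRat.of_nat, padicValRat.of_nat,
      padicValNat.eq_zero_of_not_dvd hDnd]
    have h1 : 1 ≤ padicValNat p N := one_le_padicValNat_of_dvd hNpos.ne' hNdvd
    omega

theorem stmt_3 (p : ℕ) (hp : p.Prime) (hp5 : 5 ≤ p) (n : ℕ) (hn : 1 ≤ n) :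
    H (p * n) - H n / p = 0 ∨ 2 ≤ padicValRat p (H (p * n) - H n / p) := by
  haveI : Fact p.Prime := ⟨hp⟩
  obtain ⟨m, hpm⟩ : ∃ m, p = 2*m+1 := by
    rcases hp.eq_two_or_odd with h | h
    · omega
    · exact ⟨p/2, by omega⟩
  have hS : H (p*n) - H n / p
      = (p:ℚ) * ∑ x ∈ Finset.range n ×ˢ Finset.range m,
          (2*(x.1:ℚ)+1)/((cden m x : ℕ):ℚ) := by
    rw [H_split p (by omega) n, Finset.sum_congr rfl (fun j _ => pair_sum p m hpm j),
      ← Finset.mul_sum]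
    congr 1
    rw [Finset.sum_product]
  by_cases hT : (∑ x ∈ Finset.range n ×ˢ Finset.range m,
      (2*(x.1:ℚ)+1)/((cden m x : ℕ):ℚ)) = 0
  · left; rw [hS, hT, mul_zero]
  · right
    have h1 := (T_val p hp5 m hpm n).resolve_left hT
    have hpQ : ((p:ℕ):ℚ) ≠ 0 := Nat.cast_ne_zero.mpr (by omega)
    rw [hS, padicValRat.mul hpQ hT, padicValRat.self (by omega : 1 < p)]
    omega
end

section
/- For any prime p ≥ 5 and any integer n ≥ 1, ν_p(H(p²n) − H(n)/p²) ≥ 1, where H denotes the harmonic number. -/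
open Finset

variable {p : ℕ} [hfp : Fact p.Prime]

-- norm of nat coprime to p is 1
lemma norm_nat_one {k : ℕ} (hk : ¬ p ∣ k) : ‖(k : ℚ_[p])‖ = 1 := by
  have h1 : ‖((k : ℤ) : ℚ_[p])‖ ≤ 1 := Padic.norm_int_le_one _
  have h2 : ¬ ‖((k : ℤ) : ℚ_[p])‖ < 1 := by
    rw [Padic.norm_intCast_lt_one_iff]
    exact_mod_cast hk
  push_cast at h1 h2
  linarith [lt_or_eq_of_le h1]

lemma norm_nat_mul_p_le (t : ℕ) : ‖((p * t : ℕ) : ℚ_[p])‖ ≤ (p : ℝ)⁻¹ := by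
  push_cast
  rw [norm_mul, Padic.norm_p]
  have : ‖((t : ℤ) : ℚ_[p])‖ ≤ 1 := Padic.norm_int_le_one _
  push_cast at this
  have hp0 : (0:ℝ) < (p:ℝ)⁻¹ := by
    have := hfp.out.pos
    positivity
  nlinarith [norm_nonneg ((t : ℚ_[p]))]

lemma norm_sum_le' {ι : Type*} (s : Finset ι) (f : ι → ℚ_[p]) {C : ℝ} (hC : 0 ≤ C)
    (h : ∀ i ∈ s, ‖f i‖ ≤ C) : ‖∑ i ∈ s, f i‖ ≤ C := by
  classical
  induction s using Finset.induction with
  | empty => simpa using hC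
  | @insert a s' hx ih =>
    rw [Finset.sum_insert hx]
    refine le_trans (Padic.nonarchimedean _ _) ?_
    exact max_le (h a (mem_insert_self a s')) (ih fun i hi => h i (mem_insert_of_mem hi))


lemma six_mul_sum_sq (n : ℕ) : 6 * ∑ i ∈ range n, (i:ℤ)^2 = 2*(n:ℤ)^3 - 3*(n:ℤ)^2 + n := by
  induction n with
  | zero => simp
  | succ m ih =>
    rw [Finset.sum_range_succ, mul_add, ih]
    push_cast
    ring

lemma p_dvd_sum_sq (hp5 : 5 ≤ p) : (p:ℤ) ∣ ∑ j ∈ Finset.Ico 1 p, (j:ℤ)^2 := by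
  have hp0 : 0 < p := by omega
  have hIco : ∑ j ∈ range p, (j:ℤ)^2 = ∑ j ∈ Finset.Ico 1 p, (j:ℤ)^2 := by
    rw [Finset.range_eq_Ico, Finset.sum_eq_sum_Ico_succ_bot hp0]
    simp
  have h6 : (p:ℤ) ∣ 6 * ∑ j ∈ Finset.Ico 1 p, (j:ℤ)^2 := by
    rw [← hIco, six_mul_sum_sq]
    exact ⟨2*(p:ℤ)^2 - 3*p + 1, by ring⟩
  have hpp : Prime (p:ℤ) := Int.prime_iff_natAbs_prime.mpr (by simpa using hfp.out)
  rcases (hpp.dvd_mul.mp h6) with h | h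
  · exfalso
    have : (p:ℤ) ≤ 6 := Int.le_of_dvd (by norm_num) h
    have hpd : p ∣ 6 := by exact_mod_cast Int.natCast_dvd_natCast.mp (by exact_mod_cast h)
    have hle : p ≤ 6 := Nat.le_of_dvd (by norm_num) hpd
    interval_cases p <;> revert hpd hfp <;> decide
  · exact h


lemma norm_nat_le_one (k : ℕ) : ‖(k : ℚ_[p])‖ ≤ 1 := by
  have := Padic.norm_int_le_one (p := p) (k : ℤ)
  push_cast at this
  exact this

lemma norm_int_dvd_le {z : ℤ} (h : (p:ℤ) ∣ z) : ‖(z : ℚ_[p])‖ ≤ (p : ℝ)⁻¹ := by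
  obtain ⟨t, rfl⟩ := h
  push_cast
  rw [norm_mul, Padic.norm_p]
  have h1 : ‖((t:ℤ) : ℚ_[p])‖ ≤ 1 := Padic.norm_int_le_one _
  push_cast at h1
  have hp0 : (0:ℝ) < (p:ℝ)⁻¹ := by
    have := hfp.out.pos; positivity
  nlinarith [norm_nonneg ((t : ℚ_[p]))]

lemma norm_nat_one' {k : ℕ} (hk : ¬ p ∣ k) : ‖(k : ℚ_[p])‖ = 1 := by
  have h1 : ‖((k : ℤ) : ℚ_[p])‖ ≤ 1 := Padic.norm_int_le_one _
  have h2 : ¬ ‖((k : ℤ) : ℚ_[p])‖ < 1 := by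
    rw [Padic.norm_intCast_lt_one_iff]; exact_mod_cast hk
  push_cast at h1 h2
  linarith [lt_or_eq_of_le h1]

section W
variable (p)
def sinv (j : ℕ) : ℕ := (((j : ZMod p))⁻¹).val

lemma sinv_mem {j : ℕ} (hj : j ∈ Finset.Ico 1 p) : sinv p j ∈ Finset.Ico 1 p := by
  have hplt : 1 < p := hfp.out.one_lt
  haveI : NeZero p := ⟨by omega⟩
  rw [Finset.mem_Ico] at hj ⊢
  have hnd : ¬ p ∣ j := by
    intro h; have := Nat.le_of_dvd (by omega) h; omega
  have hj0 : (j : ZMod p) ≠ 0 := by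
    rw [Ne, ZMod.natCast_eq_zero_iff]; exact hnd
  have hinv0 : ((j : ZMod p))⁻¹ ≠ 0 := by
    haveI := Fact.mk hfp.out
    exact inv_ne_zero hj0
  constructor
  · have hne : sinv p j ≠ 0 := fun h => hinv0 ((ZMod.val_eq_zero _).mp h)
    omega
  · exact ZMod.val_lt _

lemma sinv_cast {j : ℕ} : ((sinv p j : ZMod p)) = ((j : ZMod p))⁻¹ := by
  haveI : NeZero p := ⟨hfp.out.pos.ne'⟩
  simp [sinv, ZMod.natCast_val, ZMod.cast_id]

lemma sinv_invol {j : ℕ} (hj : j ∈ Finset.Ico 1 p) : sinv p (sinv p j) = j := by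
  haveI : NeZero p := ⟨hfp.out.pos.ne'⟩
  rw [Finset.mem_Ico] at hj
  have : ((sinv p (sinv p j)) : ZMod p) = (j : ZMod p) := by
    rw [sinv_cast, sinv_cast, inv_inv]
  have h1 := ZMod.val_cast_of_lt hj.2
  have h2 : sinv p (sinv p j) < p := ZMod.val_lt _
  calc sinv p (sinv p j) = ((sinv p (sinv p j) : ZMod p)).val := (ZMod.val_cast_of_lt h2).symm
    _ = ((j : ZMod p)).val := by rw [this]
    _ = j := h1

lemma p_dvd_mul_sinv {j : ℕ} (hj : j ∈ Finset.Ico 1 p) :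
    (p:ℤ) ∣ (j : ℤ) * (sinv p j) - 1 := by
  haveI : NeZero p := ⟨hfp.out.pos.ne'⟩
  rw [Finset.mem_Ico] at hj
  have hnd : ¬ p ∣ j := by
    intro h; have := Nat.le_of_dvd (by omega) h; omega
  have hj0 : (j : ZMod p) ≠ 0 := by
    rw [Ne, ZMod.natCast_eq_zero_iff]; exact hnd
  have : ((j : ℤ) * (sinv p j) - 1 : ℤ) = ((j * sinv p j : ℕ) : ℤ) - ((1:ℕ):ℤ) := by push_cast; ring
  rw [this, ← ZMod.intCast_zmod_eq_zero_iff_dvd]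
  push_cast
  rw [sinv_cast, mul_inv_cancel₀ hj0]
  ring
end W

lemma norm_W_le (hp5 : 5 ≤ p) :
    ‖∑ j ∈ Finset.Ico 1 p, (((j : ℚ_[p]))^2)⁻¹‖ ≤ (p : ℝ)⁻¹ := by
  have hpinv0 : (0:ℝ) ≤ (p:ℝ)⁻¹ := by positivity
  have hjnorm : ∀ j ∈ Finset.Ico 1 p, ‖(j : ℚ_[p])‖ = 1 := by
    intro j hj
    rw [Finset.mem_Ico] at hj
    exact norm_nat_one' (by intro h; have := Nat.le_of_dvd (by omega) h; omega)
  -- each difference term small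
  have key : ∀ j ∈ Finset.Ico 1 p,
      ‖(((j : ℚ_[p]))^2)⁻¹ - ((sinv p j : ℚ_[p]))^2‖ ≤ (p:ℝ)⁻¹ := by
    intro j hj
    have hj0 : (j : ℚ_[p]) ≠ 0 := by
      intro h; have := hjnorm j hj; rw [h] at this; simp at this
    have hid : (((j : ℚ_[p]))^2)⁻¹ - ((sinv p j : ℚ_[p]))^2
        = (((j : ℚ_[p]))^2)⁻¹ * ((1 - (j : ℚ_[p]) * (sinv p j)) * (1 + (j : ℚ_[p]) * (sinv p j))) := by
      field_simp
      ring
    rw [hid, norm_mul, norm_mul]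
    have h1 : ‖(((j : ℚ_[p]))^2)⁻¹‖ = 1 := by
      rw [norm_inv, norm_pow, hjnorm j hj]; norm_num
    have h2 : ‖(1 - (j : ℚ_[p]) * (sinv p j))‖ ≤ (p:ℝ)⁻¹ := by
      have hd := norm_int_dvd_le (p := p) (p_dvd_mul_sinv (p := p) hj)
      rw [norm_sub_rev]
      have he : ((j:ℚ_[p]) * (sinv p j) - 1) = (((j : ℤ) * (sinv p j) - 1 : ℤ) : ℚ_[p]) := by
        push_cast; ring
      rw [he]; exact hd
    have h3 : ‖(1 + (j : ℚ_[p]) * (sinv p j))‖ ≤ 1 := by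
      have : ((1:ℚ_[p]) + (j : ℚ_[p]) * (sinv p j)) = ((1 + j * sinv p j : ℕ) : ℚ_[p]) := by push_cast; ring
      rw [this]; exact norm_nat_le_one _
    calc ‖(((j : ℚ_[p]))^2)⁻¹‖ * (‖(1 - (j : ℚ_[p]) * (sinv p j))‖ * ‖(1 + (j : ℚ_[p]) * (sinv p j))‖)
        ≤ 1 * ((p:ℝ)⁻¹ * 1) := by
          apply mul_le_mul (le_of_eq h1) _ (by positivity) (by norm_num)
          exact mul_le_mul h2 h3 (norm_nonneg _) hpinv0
      _ = (p:ℝ)⁻¹ := by ring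
  -- permutation sum
  have perm : ∑ j ∈ Finset.Ico 1 p, ((sinv p j : ℚ_[p]))^2
      = ∑ j ∈ Finset.Ico 1 p, ((j : ℚ_[p]))^2 := by
    exact Finset.sum_nbij' (i := sinv p) (j := sinv p)
      (fun a ha => sinv_mem (p := p) ha) (fun a ha => sinv_mem (p := p) ha)
      (fun a ha => sinv_invol (p := p) ha) (fun a ha => sinv_invol (p := p) ha)
      (fun a ha => rfl)
  have hsq : ‖∑ j ∈ Finset.Ico 1 p, ((j : ℚ_[p]))^2‖ ≤ (p:ℝ)⁻¹ := by
    have hcast : ∑ j ∈ Finset.Ico 1 p, ((j : ℚ_[p]))^2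
        = (((∑ j ∈ Finset.Ico 1 p, (j:ℤ)^2 : ℤ)) : ℚ_[p]) := by push_cast; ring
    rw [hcast]
    exact norm_int_dvd_le (by
      have : (p:ℤ) ∣ ∑ j ∈ Finset.Ico 1 p, (j:ℤ)^2 := p_dvd_sum_sq hp5
      exact this)
  have split : ∑ j ∈ Finset.Ico 1 p, (((j : ℚ_[p]))^2)⁻¹
      = (∑ j ∈ Finset.Ico 1 p, ((((j : ℚ_[p]))^2)⁻¹ - ((sinv p j : ℚ_[p]))^2))
        + ∑ j ∈ Finset.Ico 1 p, ((sinv p j : ℚ_[p]))^2 := by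
    rw [← Finset.sum_add_distrib]
    apply Finset.sum_congr rfl
    intros; ring
  rw [split]
  refine le_trans (Padic.nonarchimedean _ _) (max_le ?_ ?_)
  · exact norm_sum_le' _ _ hpinv0 key
  · rw [perm]; exact hsq
section D
open Finset
variable {p : ℕ} [hfp : Fact p.Prime]

lemma nat_refl_id {m j : ℕ} (hj : j ≤ p) :
    (p*m+j) * (p*m+(p-j)) + j*j = p*(p*m*(m+1)+j) := by
  obtain ⟨d, rfl⟩ := Nat.exists_eq_add_of_le hj
  have h : j + d - j = d := by omega
  rw [h]; ring

lemma not_dvd_shift {m j : ℕ} (hj : j ∈ Finset.Ico 1 p) : ¬ p ∣ (p*m+j) := by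
  rw [Finset.mem_Ico] at hj
  intro h
  have : p ∣ j := (Nat.dvd_add_right ⟨m, rfl⟩).mp h
  have := Nat.le_of_dvd (by omega) this
  omega

lemma refl_mem {j : ℕ} (hj : j ∈ Finset.Ico 1 p) : p - j ∈ Finset.Ico 1 p := by
  rw [Finset.mem_Ico] at hj ⊢; omega

lemma norm_block (hp5 : 5 ≤ p) (m : ℕ) :
    ‖∑ j ∈ Finset.Ico 1 p, (((p*m+j : ℕ) : ℚ_[p]))⁻¹‖ ≤ ((p : ℝ)⁻¹)^2 := by
  have hpinv0 : (0:ℝ) ≤ (p:ℝ)⁻¹ := by positivity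
  set f : ℕ → ℚ_[p] := fun j => (((p*m+j : ℕ) : ℚ_[p]))⁻¹ with hf
  have hnorm1 : ∀ j ∈ Finset.Ico 1 p, ‖f j‖ = 1 := by
    intro j hj
    rw [hf]
    simp only
    rw [norm_inv, norm_nat_one' (not_dvd_shift hj)]
    norm_num
  have hne : ∀ j ∈ Finset.Ico 1 p, (((p*m+j : ℕ) : ℚ_[p])) ≠ 0 := by
    intro j hj h
    have := hnorm1 j hj
    rw [hf] at this; simp only [h] at this; simp at this
  -- reflection
  have hrefl : ∑ j ∈ Finset.Ico 1 p, f j = ∑ j ∈ Finset.Ico 1 p, f (p - j) := by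
    exact Finset.sum_nbij' (i := fun j => p - j) (j := fun j => p - j)
      (fun a ha => refl_mem (p := p) ha) (fun a ha => refl_mem (p := p) ha)
      (fun a ha => by show p - (p - a) = a; rw [Finset.mem_Ico] at ha; omega)
      (fun a ha => by show p - (p - a) = a; rw [Finset.mem_Ico] at ha; omega)
      (fun a ha => by
        show f a = f (p - (p - a))
        rw [Finset.mem_Ico] at ha
        have h : p - (p - a) = a := by omega
        rw [h])
  -- pair sum
  have hpair : ∀ j ∈ Finset.Ico 1 p,
      f j + f (p - j) = ((p*(2*m+1) : ℕ) : ℚ_[p]) * (f j * f (p - j)) := by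
    intro j hj
    have hj' : j ∈ Finset.Ico 1 p := hj
    have h1 : (((p*m+j : ℕ) : ℚ_[p])) ≠ 0 := hne j hj
    have h2 : (((p*m+(p-j) : ℕ) : ℚ_[p])) ≠ 0 := hne _ (refl_mem (p := p) hj)
    have hsum : (p*m+j) + (p*m+(p-j)) = p*(2*m+1) := by
      have hexp : p*(2*m+1) = p*m + (p*m + p) := by ring
      rw [hexp, Finset.mem_Ico] at *
      omega
    rw [hf]
    simp only
    rw [← hsum]
    push_cast at h1 h2 ⊢
    field_simp
    ring
  have h2S : (2 : ℚ_[p]) * (∑ j ∈ Finset.Ico 1 p, f j)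
      = ((p*(2*m+1) : ℕ) : ℚ_[p]) * ∑ j ∈ Finset.Ico 1 p, f j * f (p - j) := by
    rw [two_mul, Finset.mul_sum]
    nth_rewrite 2 [hrefl]
    rw [← Finset.sum_add_distrib]
    exact Finset.sum_congr rfl hpair
  -- C + W bound
  set C : ℚ_[p] := ∑ j ∈ Finset.Ico 1 p, f j * f (p - j) with hC
  have hCW : ‖C + ∑ j ∈ Finset.Ico 1 p, (((j : ℚ_[p]))^2)⁻¹‖ ≤ (p:ℝ)⁻¹ := by
    rw [hC, ← Finset.sum_add_distrib]
    apply norm_sum_le' _ _ hpinv0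
    intro j hj
    have hjmem := hj
    rw [Finset.mem_Ico] at hjmem
    have h1 : (((p*m+j : ℕ) : ℚ_[p])) ≠ 0 := hne j hj
    have h2 : (((p*m+(p-j) : ℕ) : ℚ_[p])) ≠ 0 := hne _ (refl_mem (p := p) hj)
    have hj0 : ((j : ℚ_[p])) ≠ 0 := by
      intro h
      have : ‖(j : ℚ_[p])‖ = 1 := norm_nat_one' (by intro hd; have := Nat.le_of_dvd (by omega) hd; omega)
      rw [h] at this; simp at this
    have hid : f j * f (p - j) + (((j : ℚ_[p]))^2)⁻¹
        = (((p*(p*m*(m+1)+j) : ℕ)) : ℚ_[p]) * (f j * f (p - j) * (((j : ℚ_[p]))^2)⁻¹) := by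
      rw [hf]
      simp only
      rw [← nat_refl_id (p := p) (le_of_lt hjmem.2)]
      push_cast at h1 h2 hj0 ⊢
      field_simp
      ring
    rw [hid, norm_mul]
    calc ‖(((p*(p*m*(m+1)+j) : ℕ)) : ℚ_[p])‖ * ‖f j * f (p - j) * (((j : ℚ_[p]))^2)⁻¹‖
        ≤ (p:ℝ)⁻¹ * 1 := by
          apply mul_le_mul (norm_nat_mul_p_le _) _ (norm_nonneg _) hpinv0
          rw [norm_mul, norm_mul, hnorm1 j hj, hnorm1 _ (refl_mem (p := p) hj), norm_inv, norm_pow]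
          rw [norm_nat_one' (by intro hd; have := Nat.le_of_dvd (by omega) hd; omega)]
          norm_num
      _ = (p:ℝ)⁻¹ := by ring
  have hCnorm : ‖C‖ ≤ (p:ℝ)⁻¹ := by
    have : C = (C + ∑ j ∈ Finset.Ico 1 p, (((j : ℚ_[p]))^2)⁻¹)
        + (- ∑ j ∈ Finset.Ico 1 p, (((j : ℚ_[p]))^2)⁻¹) := by ring
    rw [this]
    refine le_trans (Padic.nonarchimedean _ _) (max_le hCW ?_)
    rw [norm_neg]
    exact norm_W_le hp5
  have h2norm : ‖(2 : ℚ_[p])‖ = 1 := by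
    have : ((2:ℕ) : ℚ_[p]) = (2 : ℚ_[p]) := by norm_num
    rw [← this]
    apply norm_nat_one'
    intro h
    have := Nat.le_of_dvd (by norm_num) h
    omega
  have : ‖(2 : ℚ_[p]) * (∑ j ∈ Finset.Ico 1 p, f j)‖ ≤ ((p:ℝ)⁻¹)^2 := by
    rw [h2S, norm_mul]
    calc ‖((p*(2*m+1) : ℕ) : ℚ_[p])‖ * ‖C‖ ≤ (p:ℝ)⁻¹ * (p:ℝ)⁻¹ :=
          mul_le_mul (norm_nat_mul_p_le _) hCnorm (norm_nonneg _) hpinv0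
      _ = ((p:ℝ)⁻¹)^2 := by ring
  rw [norm_mul, h2norm, one_mul] at this
  exact this

end D
def Bq (p m : ℕ) : ℚ := ∑ j ∈ Finset.Ico 1 p, (((p*m+j : ℕ) : ℚ))⁻¹

section E
open Finset

lemma H_mul {p : ℕ} (hp : 1 ≤ p) (M : ℕ) :
    H (p*M) - H M / p = ∑ m ∈ range M, Bq p m := by
  induction M with
  | zero => simp [H]
  | succ M ih =>
    have hpQ : (p : ℚ) ≠ 0 := by positivity
    have h1 : H (p*(M+1)) = H (p*M) + ∑ x ∈ range p, (1:ℚ) / ((p*M+x : ℕ) + 1) := by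
      rw [show p*(M+1) = p*M + p by ring, H, Finset.sum_range_add, ← H]
    have h2 : H (M+1) = H M + 1 / ((M:ℚ)+1) := by
      rw [H, Finset.sum_range_succ, ← H]
    obtain ⟨k, rfl⟩ : ∃ k, p = k + 1 := ⟨p - 1, by omega⟩
    have h3 : ∑ x ∈ range (k+1), (1:ℚ) / (((k+1)*M+x : ℕ) + 1)
        = Bq (k+1) M + 1 / (((k+1) : ℚ)*((M:ℚ)+1)) := by
      rw [Finset.sum_range_succ]
      congr 1
      · rw [Bq, Finset.sum_Ico_eq_sum_range]
        apply Finset.sum_congr rfl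
        intro x hx
        rw [one_div]
        congr 1
        push_cast
        ring
      · congr 1
        push_cast
        ring
    rw [Finset.sum_range_succ, ← ih, h1, h2, h3]
    have hM1 : ((M:ℚ)+1) ≠ 0 := by positivity
    field_simp
    push_cast
    ring

theorem stmt_4 (p : ℕ) (hp : p.Prime) (hp5 : 5 ≤ p) (n : ℕ) (hn : 1 ≤ n) :
    H (p ^ 2 * n) - H n / (p ^ 2 : ℚ) = 0 ∨
      1 ≤ padicValRat p (H (p ^ 2 * n) - H n / (p ^ 2 : ℚ)) := by
  haveI : Fact p.Prime := ⟨hp⟩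
  set D : ℚ := H (p ^ 2 * n) - H n / (p ^ 2 : ℚ) with hD
  rcases eq_or_ne D 0 with h0 | h0
  · exact Or.inl h0
  right
  have hp1 : 1 ≤ p := by omega
  have hpQ : (p : ℚ) ≠ 0 := by positivity
  -- decomposition
  have hdec : D = (∑ m ∈ range (p*n), Bq p m) + (1/(p:ℚ)) * ∑ m ∈ range n, Bq p m := by
    rw [← H_mul hp1 (p*n), ← H_mul hp1 n, hD, show p^2*n = p*(p*n) by ring]
    field_simp
    ring
  -- norm bound
  have hpinv0 : (0:ℝ) ≤ (p:ℝ)⁻¹ := by positivity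
  have hcast : ∀ m : ℕ, ((Bq p m : ℚ) : ℚ_[p]) = ∑ j ∈ Finset.Ico 1 p, (((p*m+j : ℕ) : ℚ_[p]))⁻¹ := by
    intro m
    rw [Bq]
    push_cast
    ring
  have hsumnorm : ∀ M : ℕ, ‖((∑ m ∈ range M, Bq p m : ℚ) : ℚ_[p])‖ ≤ ((p:ℝ)⁻¹)^2 := by
    intro M
    have : ((∑ m ∈ range M, Bq p m : ℚ) : ℚ_[p]) = ∑ m ∈ range M, ((Bq p m : ℚ) : ℚ_[p]) := by
      push_cast; ring
    rw [this]
    apply norm_sum_le' _ _ (by positivity)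
    intro m _
    rw [hcast m]
    exact norm_block hp5 m
  have hnormD : ‖(D : ℚ_[p])‖ ≤ (p:ℝ)⁻¹ := by
    have hDcast : (D : ℚ_[p]) = ((∑ m ∈ range (p*n), Bq p m : ℚ) : ℚ_[p])
        + (1/(p:ℚ_[p])) * ((∑ m ∈ range n, Bq p m : ℚ) : ℚ_[p]) := by
      rw [hdec]; push_cast; ring
    rw [hDcast]
    refine le_trans (Padic.nonarchimedean _ _) (max_le ?_ ?_)
    · refine le_trans (hsumnorm (p*n)) ?_
      have h1 : (p:ℝ)⁻¹ ≤ 1 := by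
        rw [inv_le_one_iff₀]
        right; exact_mod_cast hp1
      calc ((p:ℝ)⁻¹)^2 = (p:ℝ)⁻¹ * (p:ℝ)⁻¹ := sq _
        _ ≤ 1 * (p:ℝ)⁻¹ := by nlinarith
        _ = (p:ℝ)⁻¹ := one_mul _
    · rw [norm_mul]
      have h1 : ‖(1 / (p:ℚ_[p]))‖ = (p:ℝ) := by
        rw [one_div, norm_inv, Padic.norm_p, inv_inv]
      calc ‖(1 / (p:ℚ_[p]))‖ * ‖((∑ m ∈ range n, Bq p m : ℚ) : ℚ_[p])‖
          ≤ (p:ℝ) * ((p:ℝ)⁻¹)^2 := by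
            rw [h1]
            apply mul_le_mul_of_nonneg_left (hsumnorm n) (by positivity)
        _ = (p:ℝ)⁻¹ := by
            have : (p:ℝ) ≠ 0 := by positivity
            field_simp
  -- convert norm bound to valuation
  rw [Padic.eq_padicNorm, padicNorm.eq_zpow_of_nonzero h0] at hnormD
  have hplt : (1:ℝ) < (p:ℝ) := by exact_mod_cast hp.one_lt
  have : ((p:ℝ)) ^ (-padicValRat p D) ≤ ((p:ℝ)) ^ (-1 : ℤ) := by
    push_cast at hnormD
    rw [zpow_neg_one]
    exact_mod_cast hnormD
  have := (zpow_le_zpow_iff_right₀ hplt).mp this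
  omega
end E
end

section
/- Let p ≥ 5 be a prime and n ≥ 1 an integer such that ν_p(H(n)) ≥ 1 and ν_p(H(pn)) ≥ 0. Then for each k with 1 ≤ k ≤ p−1, ν_p( H(pn+k) − H(n)/p − H(k) ) ≥ 1. -/
lemma aux_term_norm (p : ℕ) (hp : p.Prime) (a b : ℕ) (hb : 0 < b) (hbp : ¬ p ∣ b) :
    padicNorm p ((1 : ℚ) / (p * a + b) - 1 / b) ≤ (p : ℚ)⁻¹ := by
  haveI : Fact p.Prime := ⟨hp⟩
  have hb0 : ((b : ℚ)) ≠ 0 := by positivity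
  have hden : ((p : ℚ) * a + b) ≠ 0 := by positivity
  have hpab : ¬ p ∣ (p * a + b) := by
    intro h
    exact hbp ((Nat.dvd_add_right ⟨a, rfl⟩).mp h)
  have key : (1 : ℚ) / (p * a + b) - 1 / b = -((p : ℚ) * a) / ((p * a + b) * b) := by
    field_simp
    ring
  rw [key, padicNorm.div, padicNorm.neg, padicNorm.mul, padicNorm.mul]
  have h1 : padicNorm p (p : ℚ) = (p : ℚ)⁻¹ := padicNorm.padicNorm_p hp.one_lt
  have h2 : padicNorm p (a : ℚ) ≤ 1 := padicNorm.of_nat a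
  have h3 : padicNorm p ((p : ℚ) * a + b) = 1 := by
    have : ((p : ℚ) * a + b) = ((p * a + b : ℕ) : ℚ) := by push_cast; ring
    rw [this]
    exact (padicNorm.nat_eq_one_iff _).mpr hpab
  have h4 : padicNorm p (b : ℚ) = 1 := (padicNorm.nat_eq_one_iff _).mpr hbp
  rw [h1, h3, h4]
  have hp0 : (0 : ℚ) ≤ (p : ℚ)⁻¹ := by positivity
  calc (p : ℚ)⁻¹ * padicNorm p (a : ℚ) / (1 * 1) = (p : ℚ)⁻¹ * padicNorm p (a : ℚ) := by
        ring
    _ ≤ (p : ℚ)⁻¹ * 1 := by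
        exact mul_le_mul_of_nonneg_left h2 hp0
    _ = (p : ℚ)⁻¹ := by ring

lemma aux_sum_range_mul (f : ℕ → ℚ) (p n : ℕ) :
    ∑ i ∈ Finset.range (p * n), f i
      = ∑ q ∈ Finset.range n, ∑ r ∈ Finset.range p, f (p * q + r) := by
  induction n with
  | zero => simp
  | succ n ih =>
      rw [Nat.mul_succ, Finset.sum_range_add, ih, Finset.sum_range_succ]

lemma aux_wolst (p : ℕ) (hp : p.Prime) (hp5 : 5 ≤ p) :
    padicNorm p (H (p - 1)) ≤ (p : ℚ)⁻¹ := by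
  haveI : Fact p.Prime := ⟨hp⟩
  set m := p - 1 with hm
  have hmp : (m : ℚ) + 1 = p := by
    have : m + 1 = p := by omega
    exact_mod_cast congrArg (Nat.cast : ℕ → ℚ) this
  have hrefl : H m = ∑ j ∈ Finset.range m, (1 : ℚ) / ((m - 1 - j : ℕ) + 1) := by
    rw [H]
    exact (Finset.sum_range_reflect (fun i => (1 : ℚ) / (i + 1)) m).symm
  have h2H : 2 * H m = ∑ j ∈ Finset.range m,
      ((1 : ℚ) / (j + 1) + 1 / ((m - 1 - j : ℕ) + 1)) := by
    rw [Finset.sum_add_distrib, ← hrefl, ← H, two_mul]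
  have hbound : padicNorm p (2 * H m) ≤ (p : ℚ)⁻¹ := by
    rw [h2H]
    apply padicNorm.sum_le' (p := p)
    · intro j hj
      rw [Finset.mem_range] at hj
      have hsub : ((m - 1 - j : ℕ) : ℚ) + 1 = ((m - j : ℕ) : ℚ) := by
        have : (m - 1 - j) + 1 = m - j := by omega
        exact_mod_cast congrArg (Nat.cast : ℕ → ℚ) this
      have hmj : ((m - j : ℕ) : ℚ) = (m : ℚ) - j := by
        have : (j : ℚ) ≤ m := by exact_mod_cast hj.le
        push_cast [Nat.cast_sub hj.le]; ring
      have ha : ((j : ℚ) + 1) ≠ 0 := by positivity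
      have hb : ((m - j : ℕ) : ℚ) ≠ 0 := by
        have : 0 < m - j := by omega
        positivity
      have key : (1 : ℚ) / (j + 1) + 1 / ((m - 1 - j : ℕ) + 1)
          = (p : ℚ) / ((j + 1) * ((m - j : ℕ) : ℚ)) := by
        rw [hsub]
        rw [div_add_div _ _ ha hb, div_eq_div_iff (by positivity) (by positivity)]
        rw [hmj, ← hmp]
        ring
      rw [key, padicNorm.div, padicNorm.mul]
      have h1 : padicNorm p (p : ℚ) = (p : ℚ)⁻¹ := padicNorm.padicNorm_p hp.one_lt
      have h3 : padicNorm p ((j : ℚ) + 1) = 1 := by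
        have : ((j : ℚ) + 1) = ((j + 1 : ℕ) : ℚ) := by push_cast; ring
        rw [this]
        exact (padicNorm.nat_eq_one_iff _).mpr
          (Nat.not_dvd_of_pos_of_lt (by omega) (by omega))
      have h4 : padicNorm p ((m - j : ℕ) : ℚ) = 1 :=
        (padicNorm.nat_eq_one_iff _).mpr
          (Nat.not_dvd_of_pos_of_lt (by omega) (by omega))
      rw [h1, h3, h4]
      simp
    · positivity
  have h2 : padicNorm p (2 : ℚ) = 1 := by
    have : ((2 : ℕ) : ℚ) = (2 : ℚ) := by norm_num
    rw [← this]
    exact (padicNorm.nat_eq_one_iff _).mpr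
      (Nat.not_dvd_of_pos_of_lt (by omega) (by omega))
  rw [padicNorm.mul, h2, one_mul] at hbound
  exact hbound

theorem stmt_5 (p : ℕ) (hp : p.Prime) (hp5 : 5 ≤ p) (n : ℕ) (hn : 1 ≤ n)
    (h1 : 1 ≤ padicValRat p (H n)) (h2 : 0 ≤ padicValRat p (H (p * n)))
    (k : ℕ) (hk1 : 1 ≤ k) (hk2 : k ≤ p - 1) :
    H (p * n + k) - H n / p - H k = 0 ∨
      1 ≤ padicValRat p (H (p * n + k) - H n / p - H k) := by
  haveI : Fact p.Prime := ⟨hp⟩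
  set A : ℚ := ∑ j ∈ Finset.range k,
      ((1 : ℚ) / (p * n + (j + 1)) - 1 / (j + 1)) with hA
  set B : ℚ := ∑ q ∈ Finset.range n, ∑ r ∈ Finset.range (p - 1),
      ((1 : ℚ) / (p * q + (r + 1)) - 1 / (r + 1)) with hB
  set C : ℚ := (n : ℚ) * H (p - 1) with hC
  -- the decomposition
  have hsplit : ∀ q : ℕ, ∑ r ∈ Finset.range p, (1 : ℚ) / ((p * q + r : ℕ) + 1)
      = (∑ r ∈ Finset.range (p - 1), (1 : ℚ) / ((p : ℚ) * q + (r + 1)))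
        + (1 / p) * (1 / (q + 1)) := by
    intro q
    have hps : p = (p - 1) + 1 := by omega
    rw [hps, Finset.sum_range_succ, ← hps]
    congr 1
    · apply Finset.sum_congr rfl
      intro r _
      push_cast
      ring
    · have hcast : ((p - 1 : ℕ) : ℚ) = (p : ℚ) - 1 := by
        push_cast [Nat.cast_sub (by omega : 1 ≤ p)]; ring
      have hp0 : (p : ℚ) ≠ 0 := by positivity
      have hq0 : (q : ℚ) + 1 ≠ 0 := by positivity
      push_cast [hcast]
      rw [div_mul_div_comm, one_mul]
      congr 1
      ring
  have hHpn : H (p * n) = B + (n : ℚ) * H (p - 1) + H n / p := by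
    rw [H, aux_sum_range_mul (fun i => (1 : ℚ) / (i + 1)) p n]
    have : ∀ q ∈ Finset.range n, (∑ r ∈ Finset.range p, (1 : ℚ) / ((p * q + r : ℕ) + 1))
        = (∑ r ∈ Finset.range (p - 1),
            ((1 : ℚ) / (p * q + (r + 1)) - 1 / (r + 1)))
          + H (p - 1) + (1 / p) * (1 / (q + 1)) := by
      intro q _
      rw [hsplit q, Finset.sum_sub_distrib, ← H]
      ring
    rw [Finset.sum_congr rfl this, Finset.sum_add_distrib, Finset.sum_add_distrib]
    rw [← Finset.mul_sum, ← H]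
    congr 1
    · congr 1
      rw [Finset.sum_const, Finset.card_range, nsmul_eq_mul]
    · ring
  have hHpnk : H (p * n + k) = H (p * n) + ∑ j ∈ Finset.range k, (1 : ℚ) / ((p * n + j : ℕ) + 1) := by
    rw [H, Finset.sum_range_add, ← H]
  have hAeq : A = (∑ j ∈ Finset.range k, (1 : ℚ) / ((p * n + j : ℕ) + 1)) - H k := by
    rw [hA, Finset.sum_sub_distrib, ← H]
    congr 1
    apply Finset.sum_congr rfl
    intro j _
    push_cast
    ring
  have hD : H (p * n + k) - H n / p - H k = A + B + C := by
    rw [hHpnk, hHpn, hAeq, hC]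
    ring
  have hp1 : (1 : ℚ) < (p : ℚ) := by exact_mod_cast hp.one_lt
  have hpinv : (0 : ℚ) ≤ (p : ℚ)⁻¹ := by positivity
  have hnA : padicNorm p A ≤ (p : ℚ)⁻¹ := by
    rw [hA]
    apply padicNorm.sum_le' (p := p) _ hpinv
    intro j hj
    rw [Finset.mem_range] at hj
    have := aux_term_norm p hp n (j + 1) (by omega)
      (Nat.not_dvd_of_pos_of_lt (by omega) (by omega))
    convert this using 3 <;> (push_cast; try ring)
  have hnB : padicNorm p B ≤ (p : ℚ)⁻¹ := by
    rw [hB]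
    apply padicNorm.sum_le' (p := p) _ hpinv
    intro q _
    apply padicNorm.sum_le' (p := p) _ hpinv
    intro r hr
    rw [Finset.mem_range] at hr
    have := aux_term_norm p hp q (r + 1) (by omega)
      (Nat.not_dvd_of_pos_of_lt (by omega) (by omega))
    convert this using 3 <;> (push_cast; try ring)
  have hnC : padicNorm p C ≤ (p : ℚ)⁻¹ := by
    rw [hC, padicNorm.mul]
    calc padicNorm p (n : ℚ) * padicNorm p (H (p - 1))
        ≤ 1 * (p : ℚ)⁻¹ :=
          mul_le_mul (padicNorm.of_nat n) (aux_wolst p hp hp5) (padicNorm.nonneg _) zero_le_one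
      _ = (p : ℚ)⁻¹ := one_mul _
  have hnD : padicNorm p (H (p * n + k) - H n / p - H k) ≤ (p : ℚ)⁻¹ := by
    rw [hD]
    calc padicNorm p (A + B + C) ≤ max (padicNorm p (A + B)) (padicNorm p C) :=
          padicNorm.nonarchimedean
      _ ≤ max (max (padicNorm p A) (padicNorm p B)) (padicNorm p C) :=
          max_le_max padicNorm.nonarchimedean le_rfl
      _ ≤ (p : ℚ)⁻¹ := max_le (max_le hnA hnB) hnC
  by_cases hzero : H (p * n + k) - H n / p - H k = 0
  · exact Or.inl hzero
  · right
    rw [padicNorm.eq_zpow_of_nonzero hzero] at hnD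
    have : (p : ℚ)⁻¹ = (p : ℚ) ^ (-(1 : ℤ)) := by
      rw [zpow_neg, zpow_one]
    rw [this] at hnD
    have := (zpow_le_zpow_iff_right₀ hp1).mp hnD
    linarith
end

section
/- Let p ≥ 5 be a prime and n ≥ 1 an integer with ν_p(H(pn)) ≥ 1. Then for each k with 1 ≤ k ≤ p−1, ν_p(H(pn+k)) = 0 if and only if ν_p(H(k)) = 0. -/
lemma H_pos {m : ℕ} (hm : 1 ≤ m) : 0 < H m := by
  apply Finset.sum_pos
  · intro i _; positivity
  · exact ⟨0, Finset.mem_range.mpr hm⟩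

lemma val_sum_ge (p : ℕ) [Fact p.Prime] (c : ℤ) (S : Finset ℕ) (F : ℕ → ℚ)
    (h : ∀ i ∈ S, F i = 0 ∨ c ≤ padicValRat p (F i))
    (hs : ∑ i ∈ S, F i ≠ 0) : c ≤ padicValRat p (∑ i ∈ S, F i) := by
  induction S using Finset.induction with
  | empty => simp at hs
  | @insert a s hnotmem ih =>
    rw [Finset.sum_insert hnotmem] at hs ⊢
    rcases h a (Finset.mem_insert_self a s) with h0 | ha
    · rw [h0, zero_add] at hs ⊢
      exact ih (fun i hi => h i (Finset.mem_insert_of_mem hi)) hs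
    · by_cases hz : ∑ i ∈ s, F i = 0
      · rw [hz, add_zero] at hs ⊢; exact ha
      · have := ih (fun i hi => h i (Finset.mem_insert_of_mem hi)) hz
        calc c ≤ min (padicValRat p (F a)) (padicValRat p (∑ i ∈ s, F i)) := le_min ha this
          _ ≤ _ := padicValRat.min_le_padicValRat_add hs

theorem stmt_6 (p : ℕ) (hp : p.Prime) (hp5 : 5 ≤ p) (n : ℕ) (hn : 1 ≤ n)
    (h1 : 1 ≤ padicValRat p (H (p * n)))
    (k : ℕ) (hk1 : 1 ≤ k) (hk2 : k ≤ p - 1) :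
    padicValRat p (H (p * n + k)) = 0 ↔ padicValRat p (H k) = 0 := by
  haveI : Fact p.Prime := ⟨hp⟩
  have hppos : 0 < p := hp.pos
  have hsmall : ∀ j : ℕ, j < k → ¬ p ∣ (j + 1) := by
    intro j hj hdvd
    have hle : j + 1 ≤ p - 1 := le_trans hj hk2
    have hlt : j + 1 < p := lt_of_le_of_lt hle (Nat.sub_lt hppos one_pos)
    exact absurd (Nat.le_of_dvd (Nat.succ_pos j) hdvd) (not_le.mpr hlt)
  have hval_small : ∀ j : ℕ, j < k → padicValRat p ((j : ℚ) + 1) = 0 := by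
    intro j hj
    have h' : ((j : ℚ) + 1) = ((j + 1 : ℕ) : ℚ) := by push_cast; ring
    rw [h', padicValRat.of_nat, padicValNat.eq_zero_of_not_dvd (hsmall j hj)]
    simp
  have hval_big : ∀ j : ℕ, j < k → padicValRat p ((p:ℚ) * n + j + 1) = 0 := by
    intro j hj
    have h' : ((p:ℚ) * n + j + 1) = ((p * n + (j + 1) : ℕ) : ℚ) := by push_cast; ring
    have hnd : ¬ p ∣ (p * n + (j + 1)) := by
      intro hdvd
      exact hsmall j hj ((Nat.dvd_add_right ⟨n, rfl⟩).mp hdvd)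
    rw [h', padicValRat.of_nat, padicValNat.eq_zero_of_not_dvd hnd]
    simp
  -- D = H (p*n+k) - H k has valuation ≥ 1 (or is zero)
  set D : ℚ := H (p * n + k) - H k with hDdef
  have hHpn : H (p * n + k) = H (p * n) + ∑ j ∈ Finset.range k, (1 : ℚ)/((p:ℚ)*n + j + 1) := by
    rw [H, H, ← Finset.sum_range_add_sum_Ico _ (Nat.le_add_right (p*n) k),
      Finset.sum_Ico_eq_sum_range]
    simp only [Nat.add_sub_cancel_left]
    congr 1
    apply Finset.sum_congr rfl
    intro j _
    push_cast; ring_nf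
  have hDeq : D = H (p * n) +
      ∑ j ∈ Finset.range k, ((1 : ℚ)/((p:ℚ)*n + j + 1) - 1/((j:ℚ) + 1)) := by
    rw [hDdef, hHpn, H, Finset.sum_sub_distrib]
    unfold H
    ring
  have hterm : ∀ j ∈ Finset.range k,
      ((1 : ℚ)/((p:ℚ)*n + j + 1) - 1/((j:ℚ) + 1) = 0) ∨
      (1 : ℤ) ≤ padicValRat p ((1 : ℚ)/((p:ℚ)*n + j + 1) - 1/((j:ℚ) + 1)) := by
    intro j hj
    rw [Finset.mem_range] at hj
    right
    have hb : (0:ℚ) < (p:ℚ)*n + j + 1 := by positivity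
    have hs : (0:ℚ) < (j:ℚ) + 1 := by positivity
    have heq : (1 : ℚ)/((p:ℚ)*n + j + 1) - 1/((j:ℚ) + 1)
        = (-(p * n : ℚ)) / (((p:ℚ)*n + j + 1) * ((j:ℚ) + 1)) := by
      field_simp
      ring
    have hpn0 : (-(p * n : ℚ)) ≠ 0 := by
      simp only [neg_ne_zero]
      positivity
    rw [heq, padicValRat.div hpn0 (by positivity),
      padicValRat.mul hb.ne' hs.ne', padicValRat.neg,
      hval_big j hj, hval_small j hj]
    have : ((p:ℚ) * n) = ((p * n : ℕ) : ℚ) := by push_cast; ring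
    rw [this, padicValRat.of_nat]
    have h1le : 1 ≤ padicValNat p (p * n) :=
      one_le_padicValNat_of_dvd (by positivity) ⟨n, rfl⟩
    omega
  have hDval : D = 0 ∨ (1 : ℤ) ≤ padicValRat p D := by
    by_cases hD0 : D = 0
    · exact Or.inl hD0
    · right
      rw [hDeq] at hD0 ⊢
      by_cases hS : ∑ j ∈ Finset.range k, ((1 : ℚ)/((p:ℚ)*n + j + 1) - 1/((j:ℚ) + 1)) = 0
      · rw [hS, add_zero] at hD0 ⊢; exact h1
      · have hSval : (1:ℤ) ≤ padicValRat p
            (∑ j ∈ Finset.range k, ((1 : ℚ)/((p:ℚ)*n + j + 1) - 1/((j:ℚ) + 1))) :=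
          val_sum_ge p 1 _ _ hterm hS
        calc (1:ℤ) ≤ min (padicValRat p (H (p * n))) (padicValRat p _) := le_min h1 hSval
          _ ≤ _ := padicValRat.min_le_padicValRat_add hD0
  -- valuation of H k is ≥ 0
  have hHk0 : H k ≠ 0 := (H_pos hk1).ne'
  have hHkval : (0:ℤ) ≤ padicValRat p (H k) := by
    rw [H]
    apply val_sum_ge p 0 _ _ _ hHk0
    intro i hi
    rw [Finset.mem_range] at hi
    right
    rw [padicValRat.div one_ne_zero (by positivity), padicValRat.one, hval_small i hi]
    simp
  have hHpnk0 : H (p * n + k) ≠ 0 := (H_pos (by omega)).ne'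
  have hsum : H (p * n + k) = H k + D := by rw [hDdef]; ring
  constructor
  · intro h
    by_contra hne
    have hk1' : (1:ℤ) ≤ padicValRat p (H k) := by omega
    rcases hDval with hD0 | hDv
    · rw [hsum, hD0, add_zero] at h; omega
    · have : (1:ℤ) ≤ padicValRat p (H (p * n + k)) := by
        rw [hsum]
        calc (1:ℤ) ≤ min (padicValRat p (H k)) (padicValRat p D) := le_min hk1' hDv
          _ ≤ _ := padicValRat.min_le_padicValRat_add (by rw [← hsum]; exact hHpnk0)
      omega
  · intro h
    rcases hDval with hD0 | hDv
    · rw [hsum, hD0, add_zero]; exact h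
    · have hD0 : D ≠ 0 := by
        intro hz; rw [hz] at hDv; simp [padicValRat] at hDv
      rw [hsum, padicValRat.add_eq_of_lt (by rw [← hsum]; exact hHpnk0) hHk0 hD0 (by omega), h]
end

section
/- The set of positive integers n such that 3 divides the numerator of the harmonic number H(n) is exactly {2, 7, 22}. -/
instance fact3 : Fact (Nat.Prime 3) := ⟨by norm_num⟩

lemma H_succ (n : ℕ) : H (n+1) = H n + 1/(n+1) := Finset.sum_range_succ _ _

lemma H_pos_s12 {n : ℕ} (h : 1 ≤ n) : 0 < H n := by
  apply Finset.sum_pos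
  · intro i _; positivity
  · exact ⟨0, Finset.mem_range.2 (by omega)⟩

lemma val_le_zero {q : ℚ} {a b : ℤ} (ha : ¬ (3:ℤ) ∣ a) (hb : b ≠ 0) (h : q = a / b) :
    padicValRat 3 q ≤ 0 := by
  have ha0 : a ≠ 0 := by rintro rfl; exact ha (dvd_zero 3)
  have haq : (a:ℚ) ≠ 0 := Int.cast_ne_zero.2 ha0
  have hbq : (b:ℚ) ≠ 0 := Int.cast_ne_zero.2 hb
  rw [h, padicValRat.div haq hbq, padicValRat.of_int, padicValRat.of_int,
    padicValInt.eq_zero_of_not_dvd ha]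
  simp

lemma one_le_val {q : ℚ} {a b : ℤ} (ha : a ≠ 0) (hb : ¬ (3:ℤ) ∣ b) (h : q = 3*a / b) :
    1 ≤ padicValRat 3 q := by
  have hb0 : b ≠ 0 := by rintro rfl; exact hb (dvd_zero 3)
  have haq : (a:ℚ) ≠ 0 := Int.cast_ne_zero.2 ha
  have hbq : (b:ℚ) ≠ 0 := Int.cast_ne_zero.2 hb0
  have h3 : ((3:ℤ):ℚ) ≠ 0 := by norm_num
  have : ((3*a : ℤ):ℚ) = ((3:ℤ):ℚ) * (a:ℚ) := by push_cast; ring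
  rw [h, show ((3:ℚ)*a) = ((3*a:ℤ):ℚ) by push_cast; ring,
    padicValRat.div (by rw [this]; exact mul_ne_zero h3 haq) hbq,
    padicValRat.of_int, padicValRat.of_int, padicValInt.eq_zero_of_not_dvd hb]
  have hmul : padicValInt 3 (3*a) = 1 + padicValInt 3 a := by
    rw [padicValInt, padicValInt]
    rw [Int.natAbs_mul]
    rw [padicValNat.mul (by norm_num) (by simpa using ha)]
    norm_num
  rw [hmul]
  push_cast
  omega

def T (n : ℕ) : ℚ := ∑ i ∈ Finset.range n, if 3 ∣ (i+1) then 0 else (1:ℚ)/(i+1)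

lemma T_succ (n : ℕ) : T (n+1) = T n + if 3 ∣ (n+1) then 0 else (1:ℚ)/(n+1) :=
  Finset.sum_range_succ _ _

lemma H_eq (n : ℕ) : H n = (1/3) * H (n/3) + T n := by
  induction n with
  | zero => simp [H, T]
  | succ n ih =>
    by_cases h : 3 ∣ (n+1)
    · obtain ⟨k, hk⟩ := h
      have hk1 : 1 ≤ k := by omega
      have h1 : (n+1)/3 = n/3 + 1 := by omega
      have h2 : n/3 = k - 1 := by omega
      rw [H_succ, T_succ, if_pos ⟨k, hk⟩, ih, h1, H_succ, h2]
      have c1 : ((n:ℚ)+1) = 3*(k:ℚ) := by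
        have : ((n+1 : ℕ):ℚ) = ((3*k : ℕ):ℚ) := by rw [hk]
        push_cast at this; linarith
      have c2 : ((k-1 : ℕ):ℚ) = (k:ℚ) - 1 := by
        push_cast [Nat.cast_sub hk1]; ring
      rw [c1, c2]
      have hkq : (k:ℚ) ≠ 0 := by positivity
      field_simp
      rw [sub_add_cancel]; field_simp; ring
    · have h1 : (n+1)/3 = n/3 := by omega
      rw [H_succ, T_succ, if_neg h, ih, h1]
      ring

lemma T_pos {n : ℕ} (h : 1 ≤ n) : 0 < T n := by
  induction n with
  | zero => omega
  | succ n ih =>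
    rw [T_succ]
    rcases Nat.eq_zero_or_pos n with rfl | hn
    · norm_num [T]
    · have := ih hn
      have : (0:ℚ) ≤ if 3 ∣ (n+1) then 0 else (1:ℚ)/(n+1) := by
        split <;> positivity
      linarith [ih hn]

lemma val_unit {n : ℕ} (h : ¬ 3 ∣ (n+1)) : padicValRat 3 ((1:ℚ)/(n+1)) = 0 := by
  have h1 : ((n:ℚ)+1) = ((n+1:ℕ):ℚ) := by push_cast; ring
  rw [h1, one_div, padicValRat.inv, padicValRat.of_nat,
    padicValNat.eq_zero_of_not_dvd h]
  simp

lemma T_val_s12 {n : ℕ} (h : 1 ≤ n) : 0 ≤ padicValRat 3 (T n) := by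
  induction n with
  | zero => omega
  | succ n ih =>
    rcases Nat.eq_zero_or_pos n with rfl | hn
    · norm_num [T, Finset.sum_range_succ]
    · rw [T_succ]
      by_cases h3 : 3 ∣ (n+1)
      · rw [if_pos h3, add_zero]; exact ih hn
      · rw [if_neg h3]
        have hne : T n + (1:ℚ)/(n+1) ≠ 0 := by
          have := T_pos hn; positivity
        refine le_trans ?_ (padicValRat.min_le_padicValRat_add (p := 3) hne)
        rw [val_unit h3]
        exact le_min (ih hn) le_rfl

lemma step {n : ℕ} (h9 : 1 ≤ n/3) (hm : padicValRat 3 (H (n/3)) ≤ 0) :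
    padicValRat 3 (H n) ≤ 0 := by
  have hn1 : 1 ≤ n := by omega
  have hmpos := H_pos_s12 h9
  have hq : (1/3 : ℚ) * H (n/3) ≠ 0 := by positivity
  have hr : T n ≠ 0 := (T_pos hn1).ne'
  have hsum : (1/3 : ℚ) * H (n/3) + T n ≠ 0 := by
    have := T_pos hn1; positivity
  have hval13 : padicValRat 3 ((1:ℚ)/3) = -1 := by
    rw [one_div, padicValRat.inv, show ((3:ℚ)) = ((3:ℕ):ℚ) by norm_num,
      padicValRat.of_nat, padicValNat.self (by norm_num)]
    norm_num
  have hvq : padicValRat 3 ((1/3 : ℚ) * H (n/3)) ≤ -1 := by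
    rw [padicValRat.mul (by norm_num) hmpos.ne', hval13]; omega
  have hlt : padicValRat 3 ((1/3 : ℚ) * H (n/3)) < padicValRat 3 (T n) := by
    have := T_val_s12 hn1; omega
  have := padicValRat.add_eq_of_lt (p := 3) hsum hq hr hlt
  rw [H_eq n, this]
  omega

lemma Hv1 : H 1 = 1 / 1 := by norm_num [H, Finset.sum_range_succ]
lemma Hv2 : H 2 = 3 / 2 := by
  rw [show (2:ℕ) = 1+1 from rfl, H_succ, Hv1]; norm_num
lemma Hv3 : H 3 = 11 / 6 := by
  rw [show (3:ℕ) = 2+1 from rfl, H_succ, Hv2]; norm_num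
lemma Hv4 : H 4 = 25 / 12 := by
  rw [show (4:ℕ) = 3+1 from rfl, H_succ, Hv3]; norm_num
lemma Hv5 : H 5 = 137 / 60 := by
  rw [show (5:ℕ) = 4+1 from rfl, H_succ, Hv4]; norm_num
lemma Hv6 : H 6 = 49 / 20 := by
  rw [show (6:ℕ) = 5+1 from rfl, H_succ, Hv5]; norm_num
lemma Hv7 : H 7 = 363 / 140 := by
  rw [show (7:ℕ) = 6+1 from rfl, H_succ, Hv6]; norm_num
lemma Hv8 : H 8 = 761 / 280 := by
  rw [show (8:ℕ) = 7+1 from rfl, H_succ, Hv7]; norm_num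
lemma Hv9 : H 9 = 7129 / 2520 := by
  rw [show (9:ℕ) = 8+1 from rfl, H_succ, Hv8]; norm_num
lemma Hv10 : H 10 = 7381 / 2520 := by
  rw [show (10:ℕ) = 9+1 from rfl, H_succ, Hv9]; norm_num
lemma Hv11 : H 11 = 83711 / 27720 := by
  rw [show (11:ℕ) = 10+1 from rfl, H_succ, Hv10]; norm_num
lemma Hv12 : H 12 = 86021 / 27720 := by
  rw [show (12:ℕ) = 11+1 from rfl, H_succ, Hv11]; norm_num
lemma Hv13 : H 13 = 1145993 / 360360 := by
  rw [show (13:ℕ) = 12+1 from rfl, H_succ, Hv12]; norm_num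
lemma Hv14 : H 14 = 1171733 / 360360 := by
  rw [show (14:ℕ) = 13+1 from rfl, H_succ, Hv13]; norm_num
lemma Hv15 : H 15 = 1195757 / 360360 := by
  rw [show (15:ℕ) = 14+1 from rfl, H_succ, Hv14]; norm_num
lemma Hv16 : H 16 = 2436559 / 720720 := by
  rw [show (16:ℕ) = 15+1 from rfl, H_succ, Hv15]; norm_num
lemma Hv17 : H 17 = 42142223 / 12252240 := by
  rw [show (17:ℕ) = 16+1 from rfl, H_succ, Hv16]; norm_num
lemma Hv18 : H 18 = 14274301 / 4084080 := by
  rw [show (18:ℕ) = 17+1 from rfl, H_succ, Hv17]; norm_num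
lemma Hv19 : H 19 = 275295799 / 77597520 := by
  rw [show (19:ℕ) = 18+1 from rfl, H_succ, Hv18]; norm_num
lemma Hv20 : H 20 = 55835135 / 15519504 := by
  rw [show (20:ℕ) = 19+1 from rfl, H_succ, Hv19]; norm_num
lemma Hv21 : H 21 = 18858053 / 5173168 := by
  rw [show (21:ℕ) = 20+1 from rfl, H_succ, Hv20]; norm_num
lemma Hv22 : H 22 = 19093197 / 5173168 := by
  rw [show (22:ℕ) = 21+1 from rfl, H_succ, Hv21]; norm_num
lemma Hv23 : H 23 = 444316699 / 118982864 := by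
  rw [show (23:ℕ) = 22+1 from rfl, H_succ, Hv22]; norm_num
lemma Hv24 : H 24 = 1347822955 / 356948592 := by
  rw [show (24:ℕ) = 23+1 from rfl, H_succ, Hv23]; norm_num
lemma Hv25 : H 25 = 34052522467 / 8923714800 := by
  rw [show (25:ℕ) = 24+1 from rfl, H_succ, Hv24]; norm_num
lemma Hv26 : H 26 = 34395742267 / 8923714800 := by
  rw [show (26:ℕ) = 25+1 from rfl, H_succ, Hv25]; norm_num
lemma Hv27 : H 27 = 312536252003 / 80313433200 := by
  rw [show (27:ℕ) = 26+1 from rfl, H_succ, Hv26]; norm_num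
lemma Hv28 : H 28 = 315404588903 / 80313433200 := by
  rw [show (28:ℕ) = 27+1 from rfl, H_succ, Hv27]; norm_num
lemma Hv29 : H 29 = 9227046511387 / 2329089562800 := by
  rw [show (29:ℕ) = 28+1 from rfl, H_succ, Hv28]; norm_num
lemma Hv30 : H 30 = 9304682830147 / 2329089562800 := by
  rw [show (30:ℕ) = 29+1 from rfl, H_succ, Hv29]; norm_num
lemma Hv31 : H 31 = 290774257297357 / 72201776446800 := by
  rw [show (31:ℕ) = 30+1 from rfl, H_succ, Hv30]; norm_num
lemma Hv32 : H 32 = 586061125622639 / 144403552893600 := by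
  rw [show (32:ℕ) = 31+1 from rfl, H_succ, Hv31]; norm_num
lemma Hv33 : H 33 = 53676090078349 / 13127595717600 := by
  rw [show (33:ℕ) = 32+1 from rfl, H_succ, Hv32]; norm_num
lemma Hv34 : H 34 = 54062195834749 / 13127595717600 := by
  rw [show (34:ℕ) = 33+1 from rfl, H_succ, Hv33]; norm_num
lemma Hv35 : H 35 = 54437269998109 / 13127595717600 := by
  rw [show (35:ℕ) = 34+1 from rfl, H_succ, Hv34]; norm_num
lemma Hv36 : H 36 = 54801925434709 / 13127595717600 := by
  rw [show (36:ℕ) = 35+1 from rfl, H_succ, Hv35]; norm_num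
lemma Hv37 : H 37 = 2040798836801833 / 485721041551200 := by
  rw [show (37:ℕ) = 36+1 from rfl, H_succ, Hv36]; norm_num
lemma Hv38 : H 38 = 2053580969474233 / 485721041551200 := by
  rw [show (38:ℕ) = 37+1 from rfl, H_succ, Hv37]; norm_num
lemma Hv39 : H 39 = 2066035355155033 / 485721041551200 := by
  rw [show (39:ℕ) = 38+1 from rfl, H_succ, Hv38]; norm_num
lemma Hv40 : H 40 = 2078178381193813 / 485721041551200 := by
  rw [show (40:ℕ) = 39+1 from rfl, H_succ, Hv39]; norm_num
lemma Hv41 : H 41 = 85691034670497533 / 19914562703599200 := by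
  rw [show (41:ℕ) = 40+1 from rfl, H_succ, Hv40]; norm_num
lemma Hv42 : H 42 = 12309312989335019 / 2844937529085600 := by
  rw [show (42:ℕ) = 41+1 from rfl, H_succ, Hv41]; norm_num
lemma Hv43 : H 43 = 532145396070491417 / 122332313750680800 := by
  rw [show (43:ℕ) = 42+1 from rfl, H_succ, Hv42]; norm_num
lemma Hv44 : H 44 = 5884182435213075787 / 1345655451257488800 := by
  rw [show (44:ℕ) = 43+1 from rfl, H_succ, Hv43]; norm_num
lemma Hv45 : H 45 = 5914085889685464427 / 1345655451257488800 := by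
  rw [show (45:ℕ) = 44+1 from rfl, H_succ, Hv44]; norm_num
lemma Hv46 : H 46 = 5943339269060627227 / 1345655451257488800 := by
  rw [show (46:ℕ) = 45+1 from rfl, H_succ, Hv45]; norm_num
lemma Hv47 : H 47 = 280682601097106968469 / 63245806209101973600 := by
  rw [show (47:ℕ) = 46+1 from rfl, H_succ, Hv46]; norm_num
lemma Hv48 : H 48 = 282000222059796592919 / 63245806209101973600 := by
  rw [show (48:ℕ) = 47+1 from rfl, H_succ, Hv47]; norm_num
lemma Hv49 : H 49 = 13881256687139135026631 / 3099044504245996706400 := by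
  rw [show (49:ℕ) = 48+1 from rfl, H_succ, Hv48]; norm_num
lemma Hv50 : H 50 = 13943237577224054960759 / 3099044504245996706400 := by
  rw [show (50:ℕ) = 49+1 from rfl, H_succ, Hv49]; norm_num
lemma Hv51 : H 51 = 14004003155738682347159 / 3099044504245996706400 := by
  rw [show (51:ℕ) = 50+1 from rfl, H_succ, Hv50]; norm_num
lemma Hv52 : H 52 = 14063600165435720745359 / 3099044504245996706400 := by
  rw [show (52:ℕ) = 51+1 from rfl, H_succ, Hv51]; norm_num
lemma Hv53 : H 53 = 748469853272339196210427 / 164249358725037825439200 := by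
  rw [show (53:ℕ) = 52+1 from rfl, H_succ, Hv52]; norm_num
lemma Hv54 : H 54 = 250503836021181200128409 / 54749786241679275146400 := by
  rw [show (54:ℕ) = 53+1 from rfl, H_succ, Hv53]; norm_num
lemma Hv55 : H 55 = 251499286680120823312889 / 54749786241679275146400 := by
  rw [show (55:ℕ) = 54+1 from rfl, H_succ, Hv54]; norm_num
lemma Hv56 : H 56 = 252476961434436524654789 / 54749786241679275146400 := by
  rw [show (56:ℕ) = 55+1 from rfl, H_succ, Hv55]; norm_num
lemma Hv57 : H 57 = 253437484000080020709989 / 54749786241679275146400 := by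
  rw [show (57:ℕ) = 56+1 from rfl, H_succ, Hv56]; norm_num
lemma Hv58 : H 58 = 254381445831833111660789 / 54749786241679275146400 := by
  rw [show (58:ℕ) = 57+1 from rfl, H_succ, Hv57]; norm_num
lemma Hv59 : H 59 = 15063255090319832863132951 / 3230237388259077233637600 := by
  rw [show (59:ℕ) = 58+1 from rfl, H_succ, Hv58]; norm_num
lemma Hv60 : H 60 = 15117092380124150817026911 / 3230237388259077233637600 := by
  rw [show (60:ℕ) = 59+1 from rfl, H_succ, Hv59]; norm_num
lemma Hv61 : H 61 = 925372872575832277072279171 / 197044480683803711251893600 := by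
  rw [show (61:ℕ) = 60+1 from rfl, H_succ, Hv60]; norm_num
lemma Hv62 : H 62 = 928551009361054917576341971 / 197044480683803711251893600 := by
  rw [show (62:ℕ) = 61+1 from rfl, H_succ, Hv61]; norm_num
lemma Hv63 : H 63 = 310559566510213034489743057 / 65681493561267903750631200 := by
  rw [show (63:ℕ) = 62+1 from rfl, H_succ, Hv62]; norm_num
lemma Hv64 : H 64 = 623171679694215690971693339 / 131362987122535807501262400 := by
  rw [show (64:ℕ) = 63+1 from rfl, H_succ, Hv63]; norm_num
lemma Hv65 : H 65 = 625192648726870088010174299 / 131362987122535807501262400 := by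
  rw [show (65:ℕ) = 64+1 from rfl, H_succ, Hv64]; norm_num
lemma Hv66 : H 66 = 209060999005535159677640233 / 43787662374178602500420800 := by
  rw [show (66:ℕ) = 65+1 from rfl, H_succ, Hv65]; norm_num
lemma Hv67 : H 67 = 14050874595745034300902316411 / 2933773379069966367528193600 := by
  rw [show (67:ℕ) = 66+1 from rfl, H_succ, Hv66]; norm_num
lemma Hv68 : H 68 = 14094018321907827923954201611 / 2933773379069966367528193600 := by
  rw [show (68:ℕ) = 67+1 from rfl, H_succ, Hv67]; norm_num
lemma nu1 : padicValRat 3 (H 1) ≤ 0 := val_le_zero (a := 1) (b := 1) (by norm_num) (by norm_num) (by rw [Hv1]; norm_num)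
lemma nuge2 : 1 ≤ padicValRat 3 (H 2) := one_le_val (a := 1) (b := 2) (by norm_num) (by norm_num) (by rw [Hv2]; norm_num)
lemma nu3 : padicValRat 3 (H 3) ≤ 0 := val_le_zero (a := 11) (b := 6) (by norm_num) (by norm_num) (by rw [Hv3]; norm_num)
lemma nu4 : padicValRat 3 (H 4) ≤ 0 := val_le_zero (a := 25) (b := 12) (by norm_num) (by norm_num) (by rw [Hv4]; norm_num)
lemma nu5 : padicValRat 3 (H 5) ≤ 0 := val_le_zero (a := 137) (b := 60) (by norm_num) (by norm_num) (by rw [Hv5]; norm_num)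
lemma nu6 : padicValRat 3 (H 6) ≤ 0 := val_le_zero (a := 49) (b := 20) (by norm_num) (by norm_num) (by rw [Hv6]; norm_num)
lemma nuge7 : 1 ≤ padicValRat 3 (H 7) := one_le_val (a := 121) (b := 140) (by norm_num) (by norm_num) (by rw [Hv7]; norm_num)
lemma nu8 : padicValRat 3 (H 8) ≤ 0 := val_le_zero (a := 761) (b := 280) (by norm_num) (by norm_num) (by rw [Hv8]; norm_num)
lemma nu9 : padicValRat 3 (H 9) ≤ 0 := val_le_zero (a := 7129) (b := 2520) (by norm_num) (by norm_num) (by rw [Hv9]; norm_num)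
lemma nu10 : padicValRat 3 (H 10) ≤ 0 := val_le_zero (a := 7381) (b := 2520) (by norm_num) (by norm_num) (by rw [Hv10]; norm_num)
lemma nu11 : padicValRat 3 (H 11) ≤ 0 := val_le_zero (a := 83711) (b := 27720) (by norm_num) (by norm_num) (by rw [Hv11]; norm_num)
lemma nu12 : padicValRat 3 (H 12) ≤ 0 := val_le_zero (a := 86021) (b := 27720) (by norm_num) (by norm_num) (by rw [Hv12]; norm_num)
lemma nu13 : padicValRat 3 (H 13) ≤ 0 := val_le_zero (a := 1145993) (b := 360360) (by norm_num) (by norm_num) (by rw [Hv13]; norm_num)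
lemma nu14 : padicValRat 3 (H 14) ≤ 0 := val_le_zero (a := 1171733) (b := 360360) (by norm_num) (by norm_num) (by rw [Hv14]; norm_num)
lemma nu15 : padicValRat 3 (H 15) ≤ 0 := val_le_zero (a := 1195757) (b := 360360) (by norm_num) (by norm_num) (by rw [Hv15]; norm_num)
lemma nu16 : padicValRat 3 (H 16) ≤ 0 := val_le_zero (a := 2436559) (b := 720720) (by norm_num) (by norm_num) (by rw [Hv16]; norm_num)
lemma nu17 : padicValRat 3 (H 17) ≤ 0 := val_le_zero (a := 42142223) (b := 12252240) (by norm_num) (by norm_num) (by rw [Hv17]; norm_num)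
lemma nu18 : padicValRat 3 (H 18) ≤ 0 := val_le_zero (a := 14274301) (b := 4084080) (by norm_num) (by norm_num) (by rw [Hv18]; norm_num)
lemma nu19 : padicValRat 3 (H 19) ≤ 0 := val_le_zero (a := 275295799) (b := 77597520) (by norm_num) (by norm_num) (by rw [Hv19]; norm_num)
lemma nu20 : padicValRat 3 (H 20) ≤ 0 := val_le_zero (a := 55835135) (b := 15519504) (by norm_num) (by norm_num) (by rw [Hv20]; norm_num)
lemma nu21 : padicValRat 3 (H 21) ≤ 0 := val_le_zero (a := 18858053) (b := 5173168) (by norm_num) (by norm_num) (by rw [Hv21]; norm_num)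
lemma nuge22 : 1 ≤ padicValRat 3 (H 22) := one_le_val (a := 6364399) (b := 5173168) (by norm_num) (by norm_num) (by rw [Hv22]; norm_num)
lemma nu23 : padicValRat 3 (H 23) ≤ 0 := val_le_zero (a := 444316699) (b := 118982864) (by norm_num) (by norm_num) (by rw [Hv23]; norm_num)
lemma nu24 : padicValRat 3 (H 24) ≤ 0 := val_le_zero (a := 1347822955) (b := 356948592) (by norm_num) (by norm_num) (by rw [Hv24]; norm_num)
lemma nu25 : padicValRat 3 (H 25) ≤ 0 := val_le_zero (a := 34052522467) (b := 8923714800) (by norm_num) (by norm_num) (by rw [Hv25]; norm_num)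
lemma nu26 : padicValRat 3 (H 26) ≤ 0 := val_le_zero (a := 34395742267) (b := 8923714800) (by norm_num) (by norm_num) (by rw [Hv26]; norm_num)
lemma nu27 : padicValRat 3 (H 27) ≤ 0 := val_le_zero (a := 312536252003) (b := 80313433200) (by norm_num) (by norm_num) (by rw [Hv27]; norm_num)
lemma nu28 : padicValRat 3 (H 28) ≤ 0 := val_le_zero (a := 315404588903) (b := 80313433200) (by norm_num) (by norm_num) (by rw [Hv28]; norm_num)
lemma nu29 : padicValRat 3 (H 29) ≤ 0 := val_le_zero (a := 9227046511387) (b := 2329089562800) (by norm_num) (by norm_num) (by rw [Hv29]; norm_num)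
lemma nu30 : padicValRat 3 (H 30) ≤ 0 := val_le_zero (a := 9304682830147) (b := 2329089562800) (by norm_num) (by norm_num) (by rw [Hv30]; norm_num)
lemma nu31 : padicValRat 3 (H 31) ≤ 0 := val_le_zero (a := 290774257297357) (b := 72201776446800) (by norm_num) (by norm_num) (by rw [Hv31]; norm_num)
lemma nu32 : padicValRat 3 (H 32) ≤ 0 := val_le_zero (a := 586061125622639) (b := 144403552893600) (by norm_num) (by norm_num) (by rw [Hv32]; norm_num)
lemma nu33 : padicValRat 3 (H 33) ≤ 0 := val_le_zero (a := 53676090078349) (b := 13127595717600) (by norm_num) (by norm_num) (by rw [Hv33]; norm_num)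
lemma nu34 : padicValRat 3 (H 34) ≤ 0 := val_le_zero (a := 54062195834749) (b := 13127595717600) (by norm_num) (by norm_num) (by rw [Hv34]; norm_num)
lemma nu35 : padicValRat 3 (H 35) ≤ 0 := val_le_zero (a := 54437269998109) (b := 13127595717600) (by norm_num) (by norm_num) (by rw [Hv35]; norm_num)
lemma nu36 : padicValRat 3 (H 36) ≤ 0 := val_le_zero (a := 54801925434709) (b := 13127595717600) (by norm_num) (by norm_num) (by rw [Hv36]; norm_num)
lemma nu37 : padicValRat 3 (H 37) ≤ 0 := val_le_zero (a := 2040798836801833) (b := 485721041551200) (by norm_num) (by norm_num) (by rw [Hv37]; norm_num)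
lemma nu38 : padicValRat 3 (H 38) ≤ 0 := val_le_zero (a := 2053580969474233) (b := 485721041551200) (by norm_num) (by norm_num) (by rw [Hv38]; norm_num)
lemma nu39 : padicValRat 3 (H 39) ≤ 0 := val_le_zero (a := 2066035355155033) (b := 485721041551200) (by norm_num) (by norm_num) (by rw [Hv39]; norm_num)
lemma nu40 : padicValRat 3 (H 40) ≤ 0 := val_le_zero (a := 2078178381193813) (b := 485721041551200) (by norm_num) (by norm_num) (by rw [Hv40]; norm_num)
lemma nu41 : padicValRat 3 (H 41) ≤ 0 := val_le_zero (a := 85691034670497533) (b := 19914562703599200) (by norm_num) (by norm_num) (by rw [Hv41]; norm_num)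
lemma nu42 : padicValRat 3 (H 42) ≤ 0 := val_le_zero (a := 12309312989335019) (b := 2844937529085600) (by norm_num) (by norm_num) (by rw [Hv42]; norm_num)
lemma nu43 : padicValRat 3 (H 43) ≤ 0 := val_le_zero (a := 532145396070491417) (b := 122332313750680800) (by norm_num) (by norm_num) (by rw [Hv43]; norm_num)
lemma nu44 : padicValRat 3 (H 44) ≤ 0 := val_le_zero (a := 5884182435213075787) (b := 1345655451257488800) (by norm_num) (by norm_num) (by rw [Hv44]; norm_num)
lemma nu45 : padicValRat 3 (H 45) ≤ 0 := val_le_zero (a := 5914085889685464427) (b := 1345655451257488800) (by norm_num) (by norm_num) (by rw [Hv45]; norm_num)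
lemma nu46 : padicValRat 3 (H 46) ≤ 0 := val_le_zero (a := 5943339269060627227) (b := 1345655451257488800) (by norm_num) (by norm_num) (by rw [Hv46]; norm_num)
lemma nu47 : padicValRat 3 (H 47) ≤ 0 := val_le_zero (a := 280682601097106968469) (b := 63245806209101973600) (by norm_num) (by norm_num) (by rw [Hv47]; norm_num)
lemma nu48 : padicValRat 3 (H 48) ≤ 0 := val_le_zero (a := 282000222059796592919) (b := 63245806209101973600) (by norm_num) (by norm_num) (by rw [Hv48]; norm_num)
lemma nu49 : padicValRat 3 (H 49) ≤ 0 := val_le_zero (a := 13881256687139135026631) (b := 3099044504245996706400) (by norm_num) (by norm_num) (by rw [Hv49]; norm_num)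
lemma nu50 : padicValRat 3 (H 50) ≤ 0 := val_le_zero (a := 13943237577224054960759) (b := 3099044504245996706400) (by norm_num) (by norm_num) (by rw [Hv50]; norm_num)
lemma nu51 : padicValRat 3 (H 51) ≤ 0 := val_le_zero (a := 14004003155738682347159) (b := 3099044504245996706400) (by norm_num) (by norm_num) (by rw [Hv51]; norm_num)
lemma nu52 : padicValRat 3 (H 52) ≤ 0 := val_le_zero (a := 14063600165435720745359) (b := 3099044504245996706400) (by norm_num) (by norm_num) (by rw [Hv52]; norm_num)
lemma nu53 : padicValRat 3 (H 53) ≤ 0 := val_le_zero (a := 748469853272339196210427) (b := 164249358725037825439200) (by norm_num) (by norm_num) (by rw [Hv53]; norm_num)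
lemma nu54 : padicValRat 3 (H 54) ≤ 0 := val_le_zero (a := 250503836021181200128409) (b := 54749786241679275146400) (by norm_num) (by norm_num) (by rw [Hv54]; norm_num)
lemma nu55 : padicValRat 3 (H 55) ≤ 0 := val_le_zero (a := 251499286680120823312889) (b := 54749786241679275146400) (by norm_num) (by norm_num) (by rw [Hv55]; norm_num)
lemma nu56 : padicValRat 3 (H 56) ≤ 0 := val_le_zero (a := 252476961434436524654789) (b := 54749786241679275146400) (by norm_num) (by norm_num) (by rw [Hv56]; norm_num)
lemma nu57 : padicValRat 3 (H 57) ≤ 0 := val_le_zero (a := 253437484000080020709989) (b := 54749786241679275146400) (by norm_num) (by norm_num) (by rw [Hv57]; norm_num)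
lemma nu58 : padicValRat 3 (H 58) ≤ 0 := val_le_zero (a := 254381445831833111660789) (b := 54749786241679275146400) (by norm_num) (by norm_num) (by rw [Hv58]; norm_num)
lemma nu59 : padicValRat 3 (H 59) ≤ 0 := val_le_zero (a := 15063255090319832863132951) (b := 3230237388259077233637600) (by norm_num) (by norm_num) (by rw [Hv59]; norm_num)
lemma nu60 : padicValRat 3 (H 60) ≤ 0 := val_le_zero (a := 15117092380124150817026911) (b := 3230237388259077233637600) (by norm_num) (by norm_num) (by rw [Hv60]; norm_num)
lemma nu61 : padicValRat 3 (H 61) ≤ 0 := val_le_zero (a := 925372872575832277072279171) (b := 197044480683803711251893600) (by norm_num) (by norm_num) (by rw [Hv61]; norm_num)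
lemma nu62 : padicValRat 3 (H 62) ≤ 0 := val_le_zero (a := 928551009361054917576341971) (b := 197044480683803711251893600) (by norm_num) (by norm_num) (by rw [Hv62]; norm_num)
lemma nu63 : padicValRat 3 (H 63) ≤ 0 := val_le_zero (a := 310559566510213034489743057) (b := 65681493561267903750631200) (by norm_num) (by norm_num) (by rw [Hv63]; norm_num)
lemma nu64 : padicValRat 3 (H 64) ≤ 0 := val_le_zero (a := 623171679694215690971693339) (b := 131362987122535807501262400) (by norm_num) (by norm_num) (by rw [Hv64]; norm_num)
lemma nu65 : padicValRat 3 (H 65) ≤ 0 := val_le_zero (a := 625192648726870088010174299) (b := 131362987122535807501262400) (by norm_num) (by norm_num) (by rw [Hv65]; norm_num)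
lemma nu66 : padicValRat 3 (H 66) ≤ 0 := val_le_zero (a := 209060999005535159677640233) (b := 43787662374178602500420800) (by norm_num) (by norm_num) (by rw [Hv66]; norm_num)
lemma nu67 : padicValRat 3 (H 67) ≤ 0 := val_le_zero (a := 14050874595745034300902316411) (b := 2933773379069966367528193600) (by norm_num) (by norm_num) (by rw [Hv67]; norm_num)
lemma nu68 : padicValRat 3 (H 68) ≤ 0 := val_le_zero (a := 14094018321907827923954201611) (b := 2933773379069966367528193600) (by norm_num) (by norm_num) (by rw [Hv68]; norm_num)

lemma main : ∀ n, 1 ≤ n → n ≠ 2 → n ≠ 7 → n ≠ 22 → padicValRat 3 (H n) ≤ 0 := by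
  intro n
  induction n using Nat.strong_induction_on with
  | _ n ih =>
    intro h1 h2 h7 h22
    by_cases h : n ≤ 68
    · interval_cases n
      · exact nu1
      · omega
      · exact nu3
      · exact nu4
      · exact nu5
      · exact nu6
      · omega
      · exact nu8
      · exact nu9
      · exact nu10
      · exact nu11
      · exact nu12
      · exact nu13
      · exact nu14
      · exact nu15
      · exact nu16
      · exact nu17
      · exact nu18
      · exact nu19
      · exact nu20
      · exact nu21
      · omega
      · exact nu23
      · exact nu24
      · exact nu25
      · exact nu26
      · exact nu27
      · exact nu28
      · exact nu29
      · exact nu30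
      · exact nu31
      · exact nu32
      · exact nu33
      · exact nu34
      · exact nu35
      · exact nu36
      · exact nu37
      · exact nu38
      · exact nu39
      · exact nu40
      · exact nu41
      · exact nu42
      · exact nu43
      · exact nu44
      · exact nu45
      · exact nu46
      · exact nu47
      · exact nu48
      · exact nu49
      · exact nu50
      · exact nu51
      · exact nu52
      · exact nu53
      · exact nu54
      · exact nu55
      · exact nu56
      · exact nu57
      · exact nu58
      · exact nu59
      · exact nu60
      · exact nu61
      · exact nu62
      · exact nu63
      · exact nu64
      · exact nu65
      · exact nu66
      · exact nu67
      · exact nu68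
    · have h9 : 1 ≤ n/3 := by omega
      have hlt : n/3 < n := by omega
      have hm := ih (n/3) hlt (by omega) (by omega) (by omega) (by omega)
      exact step h9 hm

theorem stmt_12 :
    {n : ℕ | 1 ≤ n ∧ 1 ≤ padicValRat 3 (H n)} = {2, 7, 22} := by
  ext n
  simp only [Set.mem_setOf_eq, Set.mem_insert_iff, Set.mem_singleton_iff]
  constructor
  · rintro ⟨h1, hv⟩
    by_contra hc
    push_neg at hc
    obtain ⟨a, b, c⟩ := hc
    have := main n h1 a b c
    omega
  · rintro (rfl | rfl | rfl)
    · exact ⟨by norm_num, nuge2⟩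
    · exact ⟨by norm_num, nuge7⟩
    · exact ⟨by norm_num, nuge22⟩
end

section
/- There is no positive integer n such that 2 divides the numerator of the harmonic number H(n); equivalently, ν_2(H(n)) ≤ 0 for all n ≥ 1 (and in fact ν_2(H(n)) < 0 for n ≥ 2). -/
lemma valF (i : ℕ) : padicValRat 2 ((1 : ℚ) / (i + 1)) = -(padicValNat 2 (i + 1) : ℤ) := by
  rw [one_div, padicValRat.inv]
  congr 1
  rw [show ((i : ℚ) + 1) = ((i + 1 : ℕ) : ℚ) by push_cast; ring, padicValRat.of_nat]

lemma valNat_lt (k i n : ℕ) (h1 : i + 1 ≤ n) (h2 : n < 2 ^ (k + 1)) (h3 : i + 1 ≠ 2 ^ k) :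
    padicValNat 2 (i + 1) < k := by
  by_contra hle
  push_neg at hle
  have hdvd : 2 ^ k ∣ i + 1 := dvd_trans (pow_dvd_pow 2 hle) (pow_padicValNat_dvd)
  obtain ⟨t, ht⟩ := hdvd
  have hpk : 1 ≤ 2 ^ k := Nat.one_le_two_pow
  have h2k : (2:ℕ) ^ (k+1) = 2 ^ k * 2 := by ring
  rcases Nat.lt_or_ge t 2 with ht2 | ht2
  · interval_cases t <;> omega
  · have : 2 ^ k * 2 ≤ 2 ^ k * t := Nat.mul_le_mul_left _ ht2
    omega

lemma H_val (n : ℕ) (hn : 1 ≤ n) : padicValRat 2 (H n) = -(Nat.log 2 n : ℤ) := by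
  set k := Nat.log 2 n with hk
  have h1 : 2 ^ k ≤ n := Nat.pow_log_le_self 2 (by omega)
  have h2 : n < 2 ^ (k + 1) := Nat.lt_pow_succ_log_self (by norm_num) n
  set j := 2 ^ k - 1 with hj
  have hjn : j ∈ Finset.range n := Finset.mem_range.mpr (by
    have : 1 ≤ 2 ^ k := Nat.one_le_two_pow
    omega)
  have hpow : j + 1 = 2 ^ k := by
    have : 1 ≤ 2 ^ k := Nat.one_le_two_pow
    omega
  have Fpos : ∀ i : ℕ, 0 < (1 : ℚ) / (i + 1) := fun i => by positivity
  have valj : padicValRat 2 ((1 : ℚ) / (j + 1)) = -(k : ℤ) := by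
    rw [valF, hpow]
    simp [padicValNat.prime_pow]
  have key : ∀ i ∈ Finset.range n \ {j},
      padicValRat 2 ((1 : ℚ) / (j + 1)) < padicValRat 2 ((1 : ℚ) / (i + 1)) := by
    intro i hi
    simp only [Finset.mem_sdiff, Finset.mem_range, Finset.mem_singleton] at hi
    rw [valj, valF]
    have := valNat_lt k i n (by omega) h2 (by omega)
    omega
  rw [show H n = (1 : ℚ) / (j + 1) + ∑ i ∈ Finset.range n \ {j}, (1 : ℚ) / (i + 1) by
    rw [H, ← Finset.sum_sdiff (Finset.singleton_subset_iff.mpr hjn)]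
    rw [Finset.sum_singleton]; ring]
  rcases Finset.eq_empty_or_nonempty (Finset.range n \ {j}) with he | hne
  · rw [he, Finset.sum_empty, add_zero, valj]
  · have hlt := padicValRat.lt_sum_of_lt (p := 2) hne key Fpos
    rw [padicValRat.add_eq_of_lt (p := 2)
      (by positivity)
      (by positivity)
      (Finset.sum_pos (fun i _ => Fpos i) hne).ne' hlt, valj]

theorem stmt_13 :
    (∀ n : ℕ, 1 ≤ n → padicValRat 2 (H n) ≤ 0) ∧
      (∀ n : ℕ, 2 ≤ n → padicValRat 2 (H n) < 0) := by
  constructor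
  · intro n hn
    rw [H_val n hn]
    omega
  · intro n hn
    rw [H_val n (by omega)]
    have : 1 ≤ Nat.log 2 n := Nat.le_log_of_pow_le (by norm_num) (by omega)
    omega
end

section
/- (Wolstenholme) For every prime p ≥ 5, the numerator of the harmonic number H(p−1) is divisible by p², i.e., ν_p(H(p−1)) ≥ 2. -/
open Finset

/-- Two distinct elements of `[1, n]` have product dividing `n!`. -/
lemma aux_mul_dvd_factorial {a b n : ℕ} (ha1 : 1 ≤ a) (ha2 : a ≤ n)
    (hb1 : 1 ≤ b) (hb2 : b ≤ n) (hab : a ≠ b) : a * b ∣ n.factorial := by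
  have hsub : ({a, b} : Finset ℕ) ⊆ Finset.Icc 1 n := by
    intro x hx
    simp only [Finset.mem_insert, Finset.mem_singleton] at hx
    rcases hx with rfl | rfl <;> simp [Finset.mem_Icc, *]
  have := Finset.prod_dvd_prod_of_subset ({a, b} : Finset ℕ) (Finset.Icc 1 n)
    (fun x => x) hsub
  rwa [Finset.prod_pair hab, show Finset.Icc 1 n = Finset.Ico 1 (n + 1) by
    rw [Finset.Ico_add_one_right_eq_Icc], Finset.prod_Ico_id_eq_factorial] at this

theorem stmt_16 (p : ℕ) (hp : p.Prime) (hp5 : 5 ≤ p) :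
    2 ≤ padicValRat p (H (p - 1)) := by
  haveI : Fact p.Prime := ⟨hp⟩
  obtain ⟨m, hm⟩ : ∃ m, p = 2 * m + 1 := by
    obtain ⟨k, hk⟩ := hp.odd_of_ne_two (by omega)
    exact ⟨k, by omega⟩
  set n := p - 1 with hn
  have hnm : n = 2 * m := by omega
  have hm2 : 2 ≤ m := by omega
  have hF : 0 < n.factorial := n.factorial_pos
  -- the integer summands
  set F := n.factorial with hFdef
  set c : ℕ → ℕ := fun i => F / i with hc
  set d : ℕ → ℕ := fun i => F / (i * (p - i)) with hd
  have hdvd_c : ∀ i ∈ Finset.Ioc 0 n, i ∣ F := by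
    intro i hi
    simp only [Finset.mem_Ioc] at hi
    exact Nat.dvd_factorial hi.1 hi.2
  have hdvd_d : ∀ i ∈ Finset.Ioc 0 m, i * (p - i) ∣ F := by
    intro i hi
    simp only [Finset.mem_Ioc] at hi
    exact aux_mul_dvd_factorial hi.1 (by omega) (by omega) (by omega) (by omega)
  set N := ∑ i ∈ Finset.Ioc 0 n, c i with hN
  set M := ∑ i ∈ Finset.Ioc 0 m, d i with hM
  -- pairing : N = p * M
  have hpair : ∀ i ∈ Finset.Ioc 0 m, c i + c (p - i) = p * d i := by
    intro i hi
    have hmem := hi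
    simp only [Finset.mem_Ioc] at hi
    have h1 : i ∣ F := Nat.dvd_factorial hi.1 (by omega)
    have h2 : (p - i) ∣ F := Nat.dvd_factorial (by omega) (by omega)
    have h3 : i * (p - i) ∣ F := hdvd_d i hmem
    have hne : i * (p - i) ≠ 0 := by
      have : 0 < i := hi.1
      have : 0 < p - i := by omega
      positivity
    apply Nat.eq_of_mul_eq_mul_left (Nat.pos_of_ne_zero hne)
    rw [Nat.mul_add]
    have e1 : i * (p - i) * c i = (p - i) * F := by
      rw [hc]
      rw [mul_comm i (p - i), mul_assoc, Nat.mul_div_cancel' h1]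
    have e2 : i * (p - i) * c (p - i) = i * F := by
      rw [hc]
      rw [mul_assoc, Nat.mul_div_cancel' h2]
    rw [e1, e2, show i * (p - i) * (p * d i) = p * (i * (p - i) * d i) by ring,
      Nat.mul_div_cancel' h3]
    have : (p - i) + i = p := by omega
    calc (p - i) * F + i * F = ((p - i) + i) * F := by ring
      _ = p * F := by rw [this]
  have hNpM : N = p * M := by
    rw [hN, hM, Finset.mul_sum]
    rw [← Finset.sum_Ioc_consecutive (fun i => c i) (Nat.zero_le m) (by omega : m ≤ n)]
    have hsecond : ∑ i ∈ Finset.Ioc m n, c i = ∑ i ∈ Finset.Ioc 0 m, c (p - i) := by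
      refine Finset.sum_nbij' (fun j => p - j) (fun i => p - i) ?_ ?_ ?_ ?_ ?_
      · intro a ha; simp only [Finset.mem_Ioc] at *; omega
      · intro a ha; simp only [Finset.mem_Ioc] at *; omega
      · intro a ha; simp only [Finset.mem_Ioc] at ha; omega
      · intro a ha; simp only [Finset.mem_Ioc] at ha; omega
      · intro a ha; simp only [Finset.mem_Ioc] at ha
        congr 1; omega
    rw [hsecond, ← Finset.sum_add_distrib]
    exact Finset.sum_congr rfl hpair
  -- p ∣ M via ZMod p
  have hpodd : (2 : ZMod p) ≠ 0 := by
    have : ¬ (p ∣ 2) := fun h => by have := Nat.le_of_dvd (by norm_num) h; omega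
    simpa [ZMod.natCast_eq_zero_iff, Nat.cast_ofNat] using
      (show ((2 : ℕ) : ZMod p) ≠ 0 by
        rw [Ne, ZMod.natCast_eq_zero_iff]; exact this)
  have hcast_sub : ∀ i, i ≤ p → (((p - i : ℕ) : ZMod p)) = -(i : ZMod p) := by
    intro i hip
    rw [Nat.cast_sub hip, ZMod.natCast_self, zero_sub]
  have hine : ∀ i ∈ Finset.Ioc 0 m, ((i : ZMod p)) ≠ 0 := by
    intro i hi
    simp only [Finset.mem_Ioc] at hi
    rw [Ne, ZMod.natCast_eq_zero_iff]
    intro h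
    have := Nat.le_of_dvd hi.1 h
    omega
  have hdi : ∀ i ∈ Finset.Ioc 0 m,
      ((d i : ZMod p)) = -(((i : ZMod p))⁻¹ ^ 2) * (F : ZMod p) := by
    intro i hi
    have hkey : (i * (p - i) : ℕ) * (d i : ZMod p) = (F : ZMod p) := by
      rw [← Nat.cast_mul]
      congr 1
      simp only [hd]
      exact Nat.mul_div_cancel' (hdvd_d i hi)
    simp only [Finset.mem_Ioc] at hi
    have hip : i ≤ p := by omega
    rw [Nat.cast_mul, hcast_sub i hip] at hkey
    have hi0 := hine i (by simp [Finset.mem_Ioc]; omega)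
    rw [← hkey]
    field_simp
  have hMzero : ((M : ZMod p)) = 0 := by
    have hMsum : ((M : ZMod p)) =
        ∑ i ∈ Finset.Ioc 0 m, -(((i : ZMod p))⁻¹ ^ 2) * (F : ZMod p) := by
      rw [hM, Nat.cast_sum]
      exact Finset.sum_congr rfl hdi
    set S : ZMod p := ∑ i ∈ Finset.Ioc 0 m, ((i : ZMod p))⁻¹ ^ 2 with hS
    have hMS : ((M : ZMod p)) = -S * (F : ZMod p) := by
      rw [hMsum, hS]
      rw [neg_mul, ← Finset.sum_mul, ← neg_one_mul ((_ : ZMod p) * _),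
        Finset.sum_mul, Finset.sum_mul, Finset.mul_sum]
      exact Finset.sum_congr rfl fun i _ => by ring
    -- S + S = sum over all of Ioc 0 n
    have hdouble : S + S = ∑ i ∈ Finset.Ioc 0 n, ((i : ZMod p))⁻¹ ^ 2 := by
      rw [← Finset.sum_Ioc_consecutive (fun i => ((i : ZMod p))⁻¹ ^ 2)
        (Nat.zero_le m) (by omega : m ≤ n)]
      congr 1
      refine (Finset.sum_nbij' (fun i => p - i) (fun j => p - j) ?_ ?_ ?_ ?_ ?_).symm
      · intro a ha; simp only [Finset.mem_Ioc] at *; omega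
      · intro a ha; simp only [Finset.mem_Ioc] at *; omega
      · intro a ha; simp only [Finset.mem_Ioc] at ha; omega
      · intro a ha; simp only [Finset.mem_Ioc] at ha; omega
      · intro a ha; simp only [Finset.mem_Ioc] at ha
        rw [hcast_sub a (by omega), inv_neg, neg_pow, pow_two, pow_two]
        ring
    -- sum over Ioc 0 n equals sum over all of ZMod p
    have hall : ∑ i ∈ Finset.Ioc 0 n, ((i : ZMod p))⁻¹ ^ 2
        = ∑ x : ZMod p, (x⁻¹) ^ 2 := by
      rw [show (Finset.univ : Finset (ZMod p))
          = insert (0 : ZMod p) (Finset.univ.erase 0) by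
        rw [Finset.insert_erase (Finset.mem_univ 0)]]
      rw [Finset.sum_insert (Finset.notMem_erase _ _)]
      simp only [inv_zero, ne_eq, zero_pow, zero_add, OfNat.ofNat_ne_zero,
        not_false_eq_true]
      refine Finset.sum_nbij' (fun i => ((i : ZMod p))) (fun x => x.val) ?_ ?_ ?_ ?_ ?_
      · intro a ha
        simp only [Finset.mem_Ioc] at ha
        simp only [Finset.mem_erase, Finset.mem_univ, and_true]
        rw [Ne, ZMod.natCast_eq_zero_iff]
        intro h; have := Nat.le_of_dvd ha.1 h; omega
      · intro x hx
        simp only [Finset.mem_erase, Finset.mem_univ, and_true] at hx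
        simp only [Finset.mem_Ioc]
        constructor
        · rcases Nat.eq_zero_or_pos x.val with h | h
          · exact absurd ((ZMod.val_eq_zero x).mp h) hx
          · exact h
        · have := x.val_lt; omega
      · intro a ha
        simp only [Finset.mem_Ioc] at ha
        exact ZMod.val_cast_of_lt (by omega)
      · intro x hx
        exact ZMod.natCast_zmod_val x
      · intro a ha; rfl
    have hsq : ∑ x : ZMod p, (x⁻¹) ^ 2 = ∑ x : ZMod p, x ^ 2 := by
      exact Fintype.sum_bijective (fun x => x⁻¹)
        (inv_involutive : Function.Involutive (fun x : ZMod p => x⁻¹)).bijective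
        _ _ (fun x => rfl)
    have hzero : ∑ x : ZMod p, x ^ 2 = 0 := by
      apply FiniteField.sum_pow_lt_card_sub_one
      rw [ZMod.card]
      omega
    have hS0 : S = 0 := by
      have h2S : (2 : ZMod p) * S = 0 := by
        rw [two_mul, hdouble, hall, hsq, hzero]
      rcases mul_eq_zero.mp h2S with h | h
      · exact absurd h hpodd
      · exact h
    rw [hMS, hS0, neg_zero, zero_mul]
  have hpM : p ∣ M := by
    rwa [← ZMod.natCast_eq_zero_iff]
  have hp2N : p ^ 2 ∣ N := by
    obtain ⟨K, hK⟩ := hpM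
    exact ⟨K, by rw [hNpM, hK]; ring⟩
  -- N positive
  have hNpos : 0 < N := by
    rw [hN]
    apply Finset.sum_pos
    · intro i hi
      have := hdvd_c i hi
      simp only [Finset.mem_Ioc] at hi
      exact Nat.div_pos (Nat.le_of_dvd hF this) hi.1
    · exact ⟨1, by simp [Finset.mem_Ioc]; omega⟩
  -- H (p-1) = N / F
  have hHval : H n = (N : ℚ) / (F : ℚ) := by
    have hIoc : H n = ∑ i ∈ Finset.Ioc 0 n, (1 : ℚ) / (i : ℚ) := by
      rw [H, show Finset.Ioc 0 n = Finset.Ico 1 (n + 1) by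
        rw [Finset.Ico_add_one_right_eq_Icc, ← Finset.Icc_add_one_left_eq_Ioc]; rfl, Finset.sum_Ico_eq_sum_range]
      simp only [Nat.add_sub_cancel]
      refine Finset.sum_congr rfl fun i _ => ?_
      push_cast
      rw [add_comm]
    rw [hIoc, hN, Nat.cast_sum, Finset.sum_div]
    refine Finset.sum_congr rfl fun i hi => ?_
    have hdvd := hdvd_c i hi
    simp only [Finset.mem_Ioc] at hi
    have hi0 : (i : ℚ) ≠ 0 := Nat.cast_ne_zero.mpr (by omega)
    have hF0 : (F : ℚ) ≠ 0 := Nat.cast_ne_zero.mpr hF.ne'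
    rw [hc]
    rw [Nat.cast_div hdvd hi0]
    field_simp
  -- conclude
  rw [show H (p - 1) = H n from rfl, hHval]
  have hN0 : ((N : ℚ)) ≠ 0 := Nat.cast_ne_zero.mpr hNpos.ne'
  have hF0 : ((F : ℚ)) ≠ 0 := Nat.cast_ne_zero.mpr hF.ne'
  rw [padicValRat.div (p := p) hN0 hF0, padicValRat.of_nat, padicValRat.of_nat]
  have hFval : padicValNat p F = 0 := by
    apply padicValNat.eq_zero_of_not_dvd
    rw [hFdef]
    intro h
    have := (Nat.Prime.dvd_factorial hp).mp h
    omega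
  rw [hFval]
  have h2le : 2 ≤ padicValNat p N := by
    rw [← padicValNat_dvd_iff_le hNpos.ne']
    exact hp2N
  omega
end
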